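/- arXiv:2410.21600 — 3 statements merged into one kernel-verified Lean document; each statement's English description precedes it below -/
import Mathlib

section
/- Let S be an association scheme of size d on a finite set X. For all i, j in [d], the set R_i R_j := {R_ℓ ∈ S | p^ℓ_{ij} > 0} satisfies |R_i R_j| ≤ gcd(k_i, k_j). -/
/-- An association scheme of size `d` on a finite set `X`:
a partition `R_0, …, R_d` of `X × X` into nonempty relations with `R_0` the
diagonal, closed under transposition (`transp`), and with well-defined
intersection numbers `pnum i j ℓ = p^ℓ_{ij}`. -/
structure AssocScheme (X : Type) [Fintype X] [DecidableEq X] (d : ℕ) where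
  rel : Fin (d + 1) → Finset (X × X)
  rel_nonempty : ∀ i, (rel i).Nonempty
  partition : ∀ p : X × X, ∃! i, p ∈ rel i
  diag : ∀ p : X × X, p ∈ rel 0 ↔ p.1 = p.2
  transp : Fin (d + 1) → Fin (d + 1)
  transp_mem : ∀ i p, p ∈ rel (transp i) ↔ (p.2, p.1) ∈ rel i
  pnum : Fin (d + 1) → Fin (d + 1) → Fin (d + 1) → ℕ
  pnum_spec : ∀ i j ℓ, ∀ q ∈ rel ℓ,
    pnum i j ℓ =
      (Finset.univ.filter (fun z : X => (q.1, z) ∈ rel i ∧ (z, q.2) ∈ rel j)).card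

namespace AssocScheme

variable {X : Type} [Fintype X] [DecidableEq X] {d : ℕ}

/-- The valency `k_i := p^0_{i i'}` of the relation `R_i`. -/
def k (S : AssocScheme X d) (i : Fin (d + 1)) : ℕ := S.pnum i (S.transp i) 0

end AssocScheme


namespace AssocScheme

variable {X : Type} [Fintype X] [DecidableEq X] {d : ℕ} (S : AssocScheme X d)

lemma mem_unique {p : X × X} {a b : Fin (d + 1)} (ha : p ∈ S.rel a) (hb : p ∈ S.rel b) :
    a = b := by
  obtain ⟨c, -, hu⟩ := S.partition p
  exact (hu a ha).trans (hu b hb).symm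

lemma k_eq (i : Fin (d + 1)) (x : X) :
    S.k i = (Finset.univ.filter (fun z : X => (x, z) ∈ S.rel i)).card := by
  have h0 : ((x, x) : X × X) ∈ S.rel 0 := (S.diag _).2 rfl
  rw [k, S.pnum_spec i (S.transp i) 0 (x, x) h0]
  congr 1
  ext z
  simp only [Finset.mem_filter, Finset.mem_univ, true_and]
  exact ⟨fun h => h.1, fun h => ⟨h, (S.transp_mem i (z, x)).2 h⟩⟩

lemma k_pos (i : Fin (d + 1)) : 0 < S.k i := by
  obtain ⟨⟨a, b⟩, hab⟩ := S.rel_nonempty i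
  rw [S.k_eq i a]
  exact Finset.card_pos.2 ⟨b, Finset.mem_filter.2 ⟨Finset.mem_univ _, hab⟩⟩

lemma card_rel (i : Fin (d + 1)) : (S.rel i).card = Fintype.card X * S.k i := by
  rw [Finset.card_eq_sum_card_fiberwise (f := Prod.fst) (t := Finset.univ)
    (fun p _ => Finset.mem_univ _)]
  rw [Finset.sum_congr rfl (fun x _ => ?_), Finset.sum_const, smul_eq_mul, Finset.card_univ]
  rw [S.k_eq i x]
  refine Finset.card_nbij' (fun p => p.2) (fun z => (x, z)) ?_ ?_ ?_ ?_
  · intro p hp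
    simp only [Finset.mem_coe, Finset.mem_filter] at hp ⊢
    obtain ⟨hp1, hp2⟩ := hp
    refine ⟨Finset.mem_univ _, ?_⟩
    have : p = (x, p.2) := by rw [← hp2]
    rwa [this] at hp1
  · intro z hz
    simp only [Finset.mem_coe, Finset.mem_filter, Finset.mem_univ, true_and] at hz ⊢
    exact ⟨hz, trivial⟩
  · intro p hp
    simp only [Finset.mem_coe, Finset.mem_filter] at hp
    rw [← hp.2]
  · intro z _
    rfl

/-- Set of triangles `(x, y, z)` with `(x,y) ∈ R_i`, `(y,z) ∈ R_j`, `(x,z) ∈ R_ℓ`. -/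
def tri (i j ℓ : Fin (d + 1)) : Finset (X × X × X) :=
  Finset.univ.filter
    (fun t => (t.1, t.2.1) ∈ S.rel i ∧ (t.2.1, t.2.2) ∈ S.rel j ∧ (t.1, t.2.2) ∈ S.rel ℓ)

lemma triA (i j ℓ : Fin (d + 1)) :
    (S.tri i j ℓ).card = (S.rel i).card * S.pnum ℓ (S.transp j) i := by
  rw [Finset.card_eq_sum_card_fiberwise (f := fun t : X × X × X => (t.1, t.2.1))
      (t := S.rel i) (fun t ht => (Finset.mem_filter.1 ht).2.1)]
  rw [Finset.sum_congr rfl (fun q hq => ?_), Finset.sum_const, smul_eq_mul]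
  rw [S.pnum_spec ℓ (S.transp j) i q hq]
  refine Finset.card_nbij' (fun t => t.2.2) (fun z => (q.1, q.2, z)) ?_ ?_ ?_ ?_
  · intro t ht
    simp only [tri, Finset.mem_coe, Finset.mem_filter, Finset.mem_univ, true_and] at ht ⊢
    obtain ⟨⟨h1, h2, h3⟩, heq⟩ := ht
    have hx : t.1 = q.1 := (Prod.ext_iff.1 heq).1
    have hy : t.2.1 = q.2 := (Prod.ext_iff.1 heq).2
    rw [hx] at h3
    rw [hy] at h2
    exact ⟨h3, (S.transp_mem j (t.2.2, q.2)).2 h2⟩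
  · intro z hz
    simp only [tri, Finset.mem_coe, Finset.mem_filter, Finset.mem_univ, true_and] at hz ⊢
    obtain ⟨h1, h2⟩ := hz
    have h2' : (q.2, z) ∈ S.rel j := (S.transp_mem j (z, q.2)).1 h2
    exact ⟨⟨by rwa [Prod.mk.eta] , h2', h1⟩, trivial⟩
  · intro t ht
    simp only [Finset.mem_coe, Finset.mem_filter] at ht
    rw [← ht.2]
  · intro z _
    rfl

lemma triB (i j ℓ : Fin (d + 1)) :
    (S.tri i j ℓ).card = (S.rel j).card * S.pnum (S.transp i) ℓ j := by
  rw [Finset.card_eq_sum_card_fiberwise (f := fun t : X × X × X => t.2)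
      (t := S.rel j) (fun t ht => (Finset.mem_filter.1 ht).2.2.1)]
  rw [Finset.sum_congr rfl (fun q hq => ?_), Finset.sum_const, smul_eq_mul]
  rw [S.pnum_spec (S.transp i) ℓ j q hq]
  refine Finset.card_nbij' (fun t => t.1) (fun x => (x, q.1, q.2)) ?_ ?_ ?_ ?_
  · intro t ht
    simp only [tri, Finset.mem_coe, Finset.mem_filter, Finset.mem_univ, true_and] at ht ⊢
    obtain ⟨⟨h1, h2, h3⟩, heq⟩ := ht
    have hy : t.2.1 = q.1 := (Prod.ext_iff.1 heq).1
    have hz : t.2.2 = q.2 := (Prod.ext_iff.1 heq).2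
    rw [hy] at h1
    rw [hz] at h3
    exact ⟨(S.transp_mem i (q.1, t.1)).2 h1, h3⟩
  · intro x hx
    simp only [tri, Finset.mem_coe, Finset.mem_filter, Finset.mem_univ, true_and] at hx ⊢
    obtain ⟨h1, h2⟩ := hx
    have h1' : (x, q.1) ∈ S.rel i := (S.transp_mem i (q.1, x)).1 h1
    exact ⟨⟨h1', by rwa [Prod.mk.eta], h2⟩, trivial⟩
  · intro t ht
    simp only [Finset.mem_coe, Finset.mem_filter] at ht
    rw [← ht.2]
  · intro x _
    rfl

lemma triC (i j ℓ : Fin (d + 1)) :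
    (S.tri i j ℓ).card = (S.rel ℓ).card * S.pnum i j ℓ := by
  rw [Finset.card_eq_sum_card_fiberwise (f := fun t : X × X × X => (t.1, t.2.2))
      (t := S.rel ℓ) (fun t ht => (Finset.mem_filter.1 ht).2.2.2)]
  rw [Finset.sum_congr rfl (fun q hq => ?_), Finset.sum_const, smul_eq_mul]
  rw [S.pnum_spec i j ℓ q hq]
  refine Finset.card_nbij' (fun t => t.2.1) (fun z => (q.1, z, q.2)) ?_ ?_ ?_ ?_
  · intro t ht
    simp only [tri, Finset.mem_coe, Finset.mem_filter, Finset.mem_univ, true_and] at ht ⊢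
    obtain ⟨⟨h1, h2, h3⟩, heq⟩ := ht
    have hx : t.1 = q.1 := (Prod.ext_iff.1 heq).1
    have hz : t.2.2 = q.2 := (Prod.ext_iff.1 heq).2
    rw [hx] at h1
    rw [hz] at h2
    exact ⟨h1, h2⟩
  · intro z hz
    simp only [tri, Finset.mem_coe, Finset.mem_filter, Finset.mem_univ, true_and] at hz ⊢
    obtain ⟨h1, h2⟩ := hz
    exact ⟨⟨h1, h2, by rwa [Prod.mk.eta]⟩, trivial⟩
  · intro t ht
    simp only [Finset.mem_coe, Finset.mem_filter] at ht
    have hx : t.1 = q.1 := (Prod.ext_iff.1 ht.2).1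
    have hz : t.2.2 = q.2 := (Prod.ext_iff.1 ht.2).2
    rw [← hx, ← hz]
  · intro z _
    rfl

lemma card_X_pos (S : AssocScheme X d) : 0 < Fintype.card X := by
  have : Nonempty X := ⟨(S.rel_nonempty 0).choose.1⟩
  exact Fintype.card_pos

lemma key (i j ℓ : Fin (d + 1)) :
    S.k i * S.pnum ℓ (S.transp j) i = S.k j * S.pnum (S.transp i) ℓ j := by
  have h := (S.triA i j ℓ).symm.trans (S.triB i j ℓ)
  rw [S.card_rel, S.card_rel, mul_assoc, mul_assoc] at h
  exact Nat.eq_of_mul_eq_mul_left S.card_X_pos h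

lemma pnum_pos (i j ℓ : Fin (d + 1)) (h : 0 < S.pnum i j ℓ) :
    0 < S.pnum ℓ (S.transp j) i := by
  have h1 := (S.triC i j ℓ).symm.trans (S.triA i j ℓ)
  have hℓ : 0 < (S.rel ℓ).card := Finset.card_pos.2 (S.rel_nonempty ℓ)
  have hpos : 0 < (S.rel i).card * S.pnum ℓ (S.transp j) i := h1 ▸ Nat.mul_pos hℓ h
  exact Nat.pos_of_ne_zero fun h0 => by simp [h0] at hpos

lemma sum_pnum (i j : Fin (d + 1)) :
    ∑ ℓ : Fin (d + 1), S.pnum ℓ (S.transp j) i = S.k j := by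
  classical
  obtain ⟨⟨x, y⟩, hxy⟩ := S.rel_nonempty i
  have hk : S.k j = (Finset.univ.filter (fun z : X => (z, y) ∈ S.rel (S.transp j))).card := by
    rw [S.k_eq j y]
    congr 1
    ext z
    simp [S.transp_mem j (z, y)]
  rw [hk, Finset.card_eq_sum_card_fiberwise
      (f := fun z : X => (S.partition (x, z)).choose) (t := Finset.univ)
      (fun z _ => Finset.mem_univ _)]
  refine Finset.sum_congr rfl (fun ℓ _ => ?_)
  rw [S.pnum_spec ℓ (S.transp j) i (x, y) hxy, Finset.filter_filter]
  congr 1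
  ext z
  simp only [Finset.mem_filter, Finset.mem_univ, true_and]
  constructor
  · rintro ⟨hz1, hz2⟩
    exact ⟨hz2, S.mem_unique (S.partition (x, z)).choose_spec.1 hz1⟩
  · rintro ⟨hz, hℓ⟩
    exact ⟨hℓ ▸ (S.partition (x, z)).choose_spec.1, hz⟩

end AssocScheme

theorem card_complex_product_le_gcd {X : Type} [Fintype X] [DecidableEq X] {d : ℕ}
    (S : AssocScheme X d) (i j : Fin (d + 1)) :
    ((Finset.univ.filter (fun ℓ : Fin (d + 1) => 0 < S.pnum i j ℓ)).image S.rel).card ≤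
      Nat.gcd (S.k i) (S.k j) := by
  classical
  set g := Nat.gcd (S.k i) (S.k j) with hg
  have hki := S.k_pos i
  have hkj := S.k_pos j
  have hgpos : 0 < g := Nat.gcd_pos_of_pos_left _ hki
  set a := S.k i / g with ha
  set b := S.k j / g with hb
  have hcop : Nat.Coprime a b := Nat.coprime_div_gcd_div_gcd hgpos
  have hkia : S.k i = g * a := (Nat.mul_div_cancel' (Nat.gcd_dvd_left _ _)).symm
  have hkja : S.k j = g * b := (Nat.mul_div_cancel' (Nat.gcd_dvd_right _ _)).symm
  have hbpos : 0 < b := Nat.div_pos (Nat.le_of_dvd hkj (Nat.gcd_dvd_right _ _)) hgpos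
  set F := Finset.univ.filter (fun ℓ : Fin (d + 1) => 0 < S.pnum i j ℓ) with hF
  have hcontrib : ∀ ℓ ∈ F, b ≤ S.pnum ℓ (S.transp j) i := by
    intro ℓ hℓ
    have hpos : 0 < S.pnum ℓ (S.transp j) i :=
      S.pnum_pos i j ℓ (Finset.mem_filter.1 hℓ).2
    have hkey := S.key i j ℓ
    rw [hkia, hkja, mul_assoc, mul_assoc] at hkey
    have h2 : a * S.pnum ℓ (S.transp j) i = b * S.pnum (S.transp i) ℓ j :=
      Nat.eq_of_mul_eq_mul_left hgpos hkey
    have hdvd : b ∣ S.pnum ℓ (S.transp j) i :=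
      (hcop.symm).dvd_of_dvd_mul_left ⟨_, h2⟩
    exact Nat.le_of_dvd hpos hdvd
  have hsum : F.card * b ≤ S.k j := by
    have h1 := Finset.card_nsmul_le_sum F (fun ℓ => S.pnum ℓ (S.transp j) i) b hcontrib
    rw [smul_eq_mul] at h1
    calc F.card * b ≤ ∑ ℓ ∈ F, S.pnum ℓ (S.transp j) i := h1
      _ ≤ ∑ ℓ : Fin (d + 1), S.pnum ℓ (S.transp j) i :=
          Finset.sum_le_sum_of_subset (Finset.subset_univ F)
      _ = S.k j := S.sum_pnum i j
  have hcard : (F.image S.rel).card ≤ F.card := Finset.card_image_le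
  have : F.card ≤ g := by
    rw [hkja] at hsum
    exact Nat.le_of_mul_le_mul_right hsum hbpos
  exact hcard.trans this
end

section
/- Let A be a finite-dimensional algebra over a field given as the path algebra of the quiver with vertices {0,1,...,r} (r ≥ 1), arrows α_i : i → 0 and β_i : 0 → i for 1 ≤ i ≤ r, modulo the relations α_i β_i = 0 for all 1 ≤ i ≤ r (composing left to right). Then the Jacobson radical of A satisfies rad(A)^3 = 0. -/
/-- Generators for the star quiver algebra: idempotents `e i` for the vertices
`0, 1, …, r` (vertex `0` is the center, vertex `i.succ` the `i`-th outer vertex),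
arrows `a i` (that is, `α_i : i → 0`) and `b i` (that is, `β_i : 0 → i`). -/
inductive StarGen (r : ℕ) : Type
  | e : Fin (r + 1) → StarGen r
  | a : Fin r → StarGen r
  | b : Fin r → StarGen r

/-- The defining relations of the star quiver algebra: the path algebra relations
(the vertex idempotents are orthogonal idempotents summing to `1`, and each arrow
is supported on its source and target vertices), together with the relations
`α_i β_i = 0` (the path through the center and back along the opposite pair of arrows). -/
inductive StarRel (K : Type) [Field K] (r : ℕ) :
    FreeAlgebra K (StarGen r) → FreeAlgebra K (StarGen r) → Prop
  | idem (i j : Fin (r + 1)) :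
      StarRel K r (FreeAlgebra.ι K (StarGen.e i) * FreeAlgebra.ι K (StarGen.e j))
        (if i = j then FreeAlgebra.ι K (StarGen.e i) else 0)
  | sum_e :
      StarRel K r (∑ i : Fin (r + 1), FreeAlgebra.ι K (StarGen.e i)) 1
  | alpha (i : Fin r) :
      StarRel K r
        (FreeAlgebra.ι K (StarGen.e 0) * FreeAlgebra.ι K (StarGen.a i) *
          FreeAlgebra.ι K (StarGen.e i.succ))
        (FreeAlgebra.ι K (StarGen.a i))
  | beta (i : Fin r) :
      StarRel K r
        (FreeAlgebra.ι K (StarGen.e i.succ) * FreeAlgebra.ι K (StarGen.b i) *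
          FreeAlgebra.ι K (StarGen.e 0))
        (FreeAlgebra.ι K (StarGen.b i))
  | zero_rel (i : Fin r) :
      StarRel K r (FreeAlgebra.ι K (StarGen.a i) * FreeAlgebra.ι K (StarGen.b i)) 0

/-- The star quiver algebra `Λ`: the path algebra of the quiver with vertices
`{0, 1, …, r}`, arrows `α_i : i → 0` and `β_i : 0 → i` for `1 ≤ i ≤ r`,
modulo the relations `α_i β_i = 0`. -/
def StarAlgebra (K : Type) [Field K] (r : ℕ) : Type := RingQuot (StarRel K r)

noncomputable instance (K : Type) [Field K] (r : ℕ) : Ring (StarAlgebra K r) :=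
  inferInstanceAs (Ring (RingQuot (StarRel K r)))

noncomputable instance (K : Type) [Field K] (r : ℕ) : Algebra K (StarAlgebra K r) :=
  inferInstanceAs (Algebra K (RingQuot (StarRel K r)))

namespace StarCube

variable {K : Type} [Field K] {r : ℕ}

noncomputable def mk (K : Type) [Field K] (r : ℕ) :
    FreeAlgebra K (StarGen r) →ₐ[K] StarAlgebra K r :=
  RingQuot.mkAlgHom K (StarRel K r)

noncomputable def E (i : Fin (r + 1)) : StarAlgebra K r :=
  mk K r (FreeAlgebra.ι K (StarGen.e i))

noncomputable def A (i : Fin r) : StarAlgebra K r :=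
  mk K r (FreeAlgebra.ι K (StarGen.a i))

noncomputable def B (i : Fin r) : StarAlgebra K r :=
  mk K r (FreeAlgebra.ι K (StarGen.b i))

lemma hEE (i j : Fin (r + 1)) : (E i : StarAlgebra K r) * E j = if i = j then E i else 0 := by
  have h := RingQuot.mkAlgHom_rel K (StarRel.idem (K := K) (r := r) i j)
  simp only [map_mul] at h
  show (RingQuot.mkAlgHom K (StarRel K r)) (FreeAlgebra.ι K (StarGen.e i)) *
    (RingQuot.mkAlgHom K (StarRel K r)) (FreeAlgebra.ι K (StarGen.e j)) = _
  rw [h, apply_ite (RingQuot.mkAlgHom K (StarRel K r)), map_zero]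
  rfl

lemma hsum : (∑ i : Fin (r + 1), (E i : StarAlgebra K r)) = 1 := by
  have h := RingQuot.mkAlgHom_rel K (StarRel.sum_e (K := K) (r := r))
  simp only [map_sum, map_one] at h; exact h

lemma hA (i : Fin r) : (E 0 : StarAlgebra K r) * A i * E i.succ = A i := by
  have h := RingQuot.mkAlgHom_rel K (StarRel.alpha (K := K) (r := r) i)
  simp only [map_mul] at h; exact h

lemma hB (i : Fin r) : (E i.succ : StarAlgebra K r) * B i * E 0 = B i := by
  have h := RingQuot.mkAlgHom_rel K (StarRel.beta (K := K) (r := r) i)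
  simp only [map_mul] at h; exact h

lemma hABz (i : Fin r) : (A i : StarAlgebra K r) * B i = 0 := by
  have h := RingQuot.mkAlgHom_rel K (StarRel.zero_rel (K := K) (r := r) i)
  simp only [map_mul, map_zero] at h; exact h

lemma E_mul_A (j : Fin (r + 1)) (i : Fin r) :
    (E j : StarAlgebra K r) * A i = if j = 0 then A i else 0 := by
  conv_lhs => rw [← hA i]
  rw [← mul_assoc, ← mul_assoc, hEE]
  split_ifs with h
  · subst h; exact hA i
  · simp

lemma A_mul_E (i : Fin r) (j : Fin (r + 1)) :
    (A i : StarAlgebra K r) * E j = if i.succ = j then A i else 0 := by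
  conv_lhs => rw [← hA i]
  rw [mul_assoc, hEE]
  split_ifs with h
  · exact hA i
  · simp

lemma E_mul_B (j : Fin (r + 1)) (i : Fin r) :
    (E j : StarAlgebra K r) * B i = if j = i.succ then B i else 0 := by
  conv_lhs => rw [← hB i]
  rw [← mul_assoc, ← mul_assoc, hEE]
  split_ifs with h
  · subst h; exact hB i
  · simp

lemma B_mul_E (i : Fin r) (j : Fin (r + 1)) :
    (B i : StarAlgebra K r) * E j = if (0 : Fin (r + 1)) = j then B i else 0 := by
  conv_lhs => rw [← hB i]
  rw [mul_assoc, hEE]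
  split_ifs with h
  · exact hB i
  · simp

lemma A_mul_A (i j : Fin r) : (A i : StarAlgebra K r) * A j = 0 := by
  conv_lhs => rw [← hA j]
  rw [← mul_assoc, ← mul_assoc, A_mul_E, if_neg (Fin.succ_ne_zero i), zero_mul, zero_mul]

lemma B_mul_B (i j : Fin r) : (B i : StarAlgebra K r) * B j = 0 := by
  conv_lhs => rw [← hB j]
  rw [← mul_assoc, ← mul_assoc, B_mul_E, if_neg (Ne.symm (Fin.succ_ne_zero j)), zero_mul,
    zero_mul]

lemma A_mul_B (i j : Fin r) : (A i : StarAlgebra K r) * B j = 0 := by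
  by_cases h : i = j
  · subst h; exact hABz i
  · conv_lhs => rw [← hB j]
    rw [← mul_assoc, ← mul_assoc, A_mul_E,
      if_neg (fun hc => h (Fin.succ_injective _ hc)), zero_mul, zero_mul]

/-- The spanning set of vertices. -/
def SE : Set (StarAlgebra K r) := Set.range (E (K := K) (r := r))

def SA : Set (StarAlgebra K r) := Set.range (A (K := K) (r := r))

def SB : Set (StarAlgebra K r) := Set.range (B (K := K) (r := r))

def SC : Set (StarAlgebra K r) := {x | ∃ i j, x = (B i : StarAlgebra K r) * A j}

/-- The arrow ideal (as a `K`-submodule). -/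
noncomputable def J (K : Type) [Field K] (r : ℕ) : Submodule K (StarAlgebra K r) :=
  Submodule.span K (SA ∪ SB ∪ SC)

noncomputable def CC (K : Type) [Field K] (r : ℕ) : Submodule K (StarAlgebra K r) :=
  Submodule.span K (SC (K := K) (r := r))

lemma gen_mul_gen {s t : StarAlgebra K r} (hs : s ∈ SA ∪ SB ∪ SC) (ht : t ∈ SA ∪ SB ∪ SC) :
    s * t ∈ CC K r := by
  rcases hs with ((⟨i, rfl⟩ | ⟨i, rfl⟩) | ⟨i, j, rfl⟩) <;>
    rcases ht with ((⟨k, rfl⟩ | ⟨k, rfl⟩) | ⟨k, l, rfl⟩)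
  · rw [A_mul_A]; exact zero_mem _
  · rw [A_mul_B]; exact zero_mem _
  · rw [← mul_assoc, A_mul_B, zero_mul]; exact zero_mem _
  · exact Submodule.subset_span ⟨i, k, rfl⟩
  · rw [B_mul_B]; exact zero_mem _
  · rw [← mul_assoc, B_mul_B, zero_mul]; exact zero_mem _
  · rw [mul_assoc, A_mul_A, mul_zero]; exact zero_mem _
  · rw [mul_assoc, A_mul_B, mul_zero]; exact zero_mem _
  · rw [mul_assoc, ← mul_assoc (A j), A_mul_B, zero_mul, mul_zero]; exact zero_mem _

lemma mul_J_J {x y : StarAlgebra K r} (hx : x ∈ J K r) (hy : y ∈ J K r) :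
    x * y ∈ CC K r := by
  induction hx using Submodule.span_induction with
  | mem s hs =>
    induction hy using Submodule.span_induction with
    | mem t ht => exact gen_mul_gen hs ht
    | zero => rw [mul_zero]; exact zero_mem _
    | add u v _ _ h1 h2 => rw [mul_add]; exact add_mem h1 h2
    | smul a u _ h => rw [mul_smul_comm]; exact Submodule.smul_mem _ _ h
  | zero => rw [zero_mul]; exact zero_mem _
  | add u v _ _ h1 h2 => rw [add_mul]; exact add_mem h1 h2
  | smul a u _ h => rw [smul_mul_assoc]; exact Submodule.smul_mem _ _ h

lemma gen_C_mul_gen {s t : StarAlgebra K r} (hs : s ∈ SC) (ht : t ∈ SA ∪ SB ∪ SC) :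
    s * t = 0 := by
  obtain ⟨i, j, rfl⟩ := hs
  rcases ht with ((⟨k, rfl⟩ | ⟨k, rfl⟩) | ⟨k, l, rfl⟩)
  · rw [mul_assoc, A_mul_A, mul_zero]
  · rw [mul_assoc, A_mul_B, mul_zero]
  · rw [mul_assoc, ← mul_assoc (A j), A_mul_B, zero_mul, mul_zero]

lemma mul_C_J {x y : StarAlgebra K r} (hx : x ∈ CC K r) (hy : y ∈ J K r) :
    x * y = 0 := by
  induction hx using Submodule.span_induction with
  | mem s hs =>
    induction hy using Submodule.span_induction with
    | mem t ht => exact gen_C_mul_gen hs ht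
    | zero => rw [mul_zero]
    | add u v _ _ h1 h2 => rw [mul_add, h1, h2, add_zero]
    | smul a u _ h => rw [mul_smul_comm, h, smul_zero]
  | zero => rw [zero_mul]
  | add u v _ _ h1 h2 => rw [add_mul, h1, h2, add_zero]
  | smul a u _ h => rw [smul_mul_assoc, h, smul_zero]

/-- The full spanning submodule. -/
noncomputable def V (K : Type) [Field K] (r : ℕ) : Submodule K (StarAlgebra K r) :=
  Submodule.span K (SE ∪ (SA ∪ SB ∪ SC))

lemma gen_mul_gen_V {s t : StarAlgebra K r} (hs : s ∈ SE ∪ (SA ∪ SB ∪ SC))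
    (ht : t ∈ SE ∪ (SA ∪ SB ∪ SC)) : s * t ∈ V K r := by
  have hsub : (SA ∪ SB ∪ SC : Set (StarAlgebra K r)) ⊆ SE ∪ (SA ∪ SB ∪ SC) :=
    Set.subset_union_right
  rcases hs with (⟨i, rfl⟩ | hs')
  · rcases ht with (⟨k, rfl⟩ | ((⟨k, rfl⟩ | ⟨k, rfl⟩) | ⟨k, l, rfl⟩))
    · rw [hEE]; split_ifs
      · exact Submodule.subset_span (Or.inl ⟨i, rfl⟩)
      · exact zero_mem _
    · rw [E_mul_A]; split_ifs
      · exact Submodule.subset_span (Or.inr (Or.inl (Or.inl ⟨k, rfl⟩)))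
      · exact zero_mem _
    · rw [E_mul_B]; split_ifs
      · exact Submodule.subset_span (Or.inr (Or.inl (Or.inr ⟨k, rfl⟩)))
      · exact zero_mem _
    · rw [← mul_assoc, E_mul_B]; split_ifs
      · exact Submodule.subset_span (Or.inr (Or.inr ⟨k, l, rfl⟩))
      · rw [zero_mul]; exact zero_mem _
  · rcases ht with (⟨k, rfl⟩ | ht')
    · rcases hs' with ((⟨i, rfl⟩ | ⟨i, rfl⟩) | ⟨i, j, rfl⟩)
      · rw [A_mul_E]; split_ifs
        · exact Submodule.subset_span (Or.inr (Or.inl (Or.inl ⟨i, rfl⟩)))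
        · exact zero_mem _
      · rw [B_mul_E]; split_ifs
        · exact Submodule.subset_span (Or.inr (Or.inl (Or.inr ⟨i, rfl⟩)))
        · exact zero_mem _
      · rw [mul_assoc, A_mul_E]; split_ifs
        · exact Submodule.subset_span (Or.inr (Or.inr ⟨i, j, rfl⟩))
        · rw [mul_zero]; exact zero_mem _
    · have : s * t ∈ CC K r :=
        gen_mul_gen hs' ht'
      exact Submodule.span_le.mpr (fun x hx => Submodule.subset_span
        (Or.inr (Or.inr hx))) this

lemma mul_mem_V {x y : StarAlgebra K r} (hx : x ∈ V K r) (hy : y ∈ V K r) :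
    x * y ∈ V K r := by
  induction hx using Submodule.span_induction with
  | mem s hs =>
    induction hy using Submodule.span_induction with
    | mem t ht => exact gen_mul_gen_V hs ht
    | zero => rw [mul_zero]; exact zero_mem _
    | add u v _ _ h1 h2 => rw [mul_add]; exact add_mem h1 h2
    | smul a u _ h => rw [mul_smul_comm]; exact Submodule.smul_mem _ _ h
  | zero => rw [zero_mul]; exact zero_mem _
  | add u v _ _ h1 h2 => rw [add_mul]; exact add_mem h1 h2
  | smul a u _ h => rw [smul_mul_assoc]; exact Submodule.smul_mem _ _ h

lemma mem_V (x : StarAlgebra K r) : x ∈ V K r := by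
  obtain ⟨y, rfl⟩ := RingQuot.mkAlgHom_surjective K (StarRel K r) x
  show mk K r y ∈ V K r
  induction y using FreeAlgebra.induction with
  | grade0 c =>
    have h1 : (mk K r) (algebraMap K _ c) = c • (1 : StarAlgebra K r) := by
      rw [AlgHom.commutes, Algebra.algebraMap_eq_smul_one]
    rw [h1, ← hsum, Finset.smul_sum]
    exact Submodule.sum_mem _ fun i _ =>
      Submodule.smul_mem _ _ (Submodule.subset_span (Or.inl ⟨i, rfl⟩))
  | grade1 g =>
    cases g with
    | e i => exact Submodule.subset_span (Or.inl ⟨i, rfl⟩)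
    | a i => exact Submodule.subset_span (Or.inr (Or.inl (Or.inl ⟨i, rfl⟩)))
    | b i => exact Submodule.subset_span (Or.inr (Or.inl (Or.inr ⟨i, rfl⟩)))
  | mul u v hu hv => rw [map_mul]; exact mul_mem_V hu hv
  | add u v hu hv => rw [map_add]; exact add_mem hu hv

/-- The character of the algebra at vertex `k`. -/
noncomputable def φ (k : Fin (r + 1)) : FreeAlgebra K (StarGen r) →ₐ[K] K :=
  FreeAlgebra.lift K (fun g => match g with
    | .e i => if i = k then (1 : K) else 0
    | .a _ => 0
    | .b _ => 0)

lemma φrel (k : Fin (r + 1)) : ∀ ⦃x y⦄, StarRel K r x y → φ (K := K) (r := r) k x = φ k y := by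
  intro x y h
  cases h with
  | idem i j =>
    simp only [map_mul, apply_ite (φ (K := K) (r := r) k), map_zero, φ,
      FreeAlgebra.lift_ι_apply]
    split_ifs <;> simp_all
  | sum_e =>
    simp [φ, map_sum, FreeAlgebra.lift_ι_apply, map_one]
  | alpha i => simp [φ, map_mul, FreeAlgebra.lift_ι_apply]
  | beta i => simp [φ, map_mul, FreeAlgebra.lift_ι_apply]
  | zero_rel i => simp [φ, map_mul, FreeAlgebra.lift_ι_apply]

noncomputable def f (k : Fin (r + 1)) : StarAlgebra K r →ₐ[K] K :=
  RingQuot.liftAlgHom K ⟨φ k, φrel k⟩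

lemma f_E (k i : Fin (r + 1)) : f (K := K) (r := r) k (E i) = if i = k then 1 else 0 := by
  show (RingQuot.liftAlgHom K ⟨φ k, φrel k⟩) ((RingQuot.mkAlgHom K (StarRel K r))
    (FreeAlgebra.ι K (StarGen.e i))) = _
  rw [RingQuot.liftAlgHom_mkAlgHom_apply]
  simp [φ, FreeAlgebra.lift_ι_apply]

lemma f_A (k : Fin (r + 1)) (i : Fin r) : f (K := K) (r := r) k (A i) = 0 := by
  show (RingQuot.liftAlgHom K ⟨φ k, φrel k⟩) ((RingQuot.mkAlgHom K (StarRel K r))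
    (FreeAlgebra.ι K (StarGen.a i))) = _
  rw [RingQuot.liftAlgHom_mkAlgHom_apply]
  simp [φ, FreeAlgebra.lift_ι_apply]

lemma f_B (k : Fin (r + 1)) (i : Fin r) : f (K := K) (r := r) k (B i) = 0 := by
  show (RingQuot.liftAlgHom K ⟨φ k, φrel k⟩) ((RingQuot.mkAlgHom K (StarRel K r))
    (FreeAlgebra.ι K (StarGen.b i))) = _
  rw [RingQuot.liftAlgHom_mkAlgHom_apply]
  simp [φ, FreeAlgebra.lift_ι_apply]

lemma ker_max (k : Fin (r + 1)) :
    (RingHom.ker (f (K := K) (r := r) k)).IsMaximal := by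
  rw [Ideal.isMaximal_iff]
  constructor
  · intro h
    rw [RingHom.mem_ker, map_one] at h
    exact one_ne_zero h
  · intro Jid x hIJ hxI hxJ
    have hfx : f (K := K) (r := r) k x ≠ 0 := by
      simpa [RingHom.mem_ker] using hxI
    have h1 : (1 : StarAlgebra K r) =
        (1 - (f (K := K) (r := r) k x)⁻¹ • x) + (f (K := K) (r := r) k x)⁻¹ • x := by
      simp
    rw [h1]
    refine Submodule.add_mem _ (hIJ ?_) ?_
    · rw [RingHom.mem_ker, map_sub, map_one, map_smul, smul_eq_mul, inv_mul_cancel₀ hfx,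
        sub_self]
    · rw [Algebra.smul_def]
      exact Ideal.mul_mem_left _ _ hxJ

lemma f_J_zero {x : StarAlgebra K r} (hx : x ∈ J K r) (k : Fin (r + 1)) :
    f (K := K) (r := r) k x = 0 := by
  induction hx using Submodule.span_induction with
  | mem s hs =>
    rcases hs with ((⟨i, rfl⟩ | ⟨i, rfl⟩) | ⟨i, j, rfl⟩)
    · exact f_A k i
    · exact f_B k i
    · rw [map_mul, f_B, zero_mul]
  | zero => exact map_zero _
  | add u v _ _ h1 h2 => rw [map_add, h1, h2, add_zero]
  | smul a u _ h => rw [map_smul, h, smul_zero]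

lemma mem_J_of_jac {x : StarAlgebra K r}
    (hx : x ∈ (⊥ : Ideal (StarAlgebra K r)).jacobson) : x ∈ J K r := by
  have hker : ∀ k : Fin (r + 1), f (K := K) (r := r) k x = 0 := by
    intro k
    have hle : (⊥ : Ideal (StarAlgebra K r)).jacobson ≤ RingHom.ker (f (K := K) (r := r) k) :=
      sInf_le ⟨bot_le, ker_max k⟩
    exact RingHom.mem_ker.mp (hle hx)
  have hxV := mem_V x
  rw [V, Submodule.span_union] at hxV
  rcases Submodule.mem_sup.mp hxV with ⟨u, hu, j, hj, rfl⟩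
  obtain ⟨c, rfl⟩ := Submodule.mem_span_range_iff_exists_fun K |>.mp hu
  have hck : ∀ k, c k = 0 := by
    intro k
    have h0 := hker k
    rw [map_add, f_J_zero hj, add_zero, map_sum] at h0
    have hterm : ∀ i : Fin (r + 1),
        f (K := K) (r := r) k (c i • E i) = if i = k then c i else 0 := by
      intro i
      rw [map_smul, f_E, smul_ite, smul_eq_mul, mul_one, smul_zero]
    rw [Finset.sum_congr rfl (fun i _ => hterm i), Finset.sum_ite_eq'] at h0
    simpa using h0
  have hu0 : (∑ i, c i • (E i : StarAlgebra K r)) = 0 := by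
    simp [hck]
  rw [hu0, zero_add]
  exact hj

end StarCube

/-- The Jacobson radical of the star quiver algebra `Λ` satisfies `rad(Λ)³ = 0`. -/
theorem starAlgebra_radical_cube_zero (K : Type) [Field K] (r : ℕ) (hr : 1 ≤ r) :
    ∀ a b c : StarAlgebra K r,
      a ∈ (⊥ : Ideal (StarAlgebra K r)).jacobson →
      b ∈ (⊥ : Ideal (StarAlgebra K r)).jacobson →
      c ∈ (⊥ : Ideal (StarAlgebra K r)).jacobson →
      a * b * c = 0 := by
  intro a b c ha hb hc
  exact StarCube.mul_C_J
    (StarCube.mul_J_J (StarCube.mem_J_of_jac ha) (StarCube.mem_J_of_jac hb))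
    (StarCube.mem_J_of_jac hc)
end

section
/- Let R be a field and S a quasi-thin association scheme on a finite set X with fixed base vertex x. The Terwilliger algebra T = T_R(x) is a cellular algebra with respect to the involution given by matrix transpose, with cell datum I = {0,1,...,r} partially ordered by 0 < 1, 0 < 2, ..., 0 < r (and 1,...,r pairwise incomparable), M(ℓ) = C_ℓ, and cellular basis {b^ℓ_{ij}}. -/
set_option synthInstance.maxHeartbeats 1000000
set_option maxHeartbeats 1000000

/-- The adjacency matrix of the relation `R_i` over a commutative ring `R`. -/
def AssocScheme.adj {X : Type} [Fintype X] [DecidableEq X] {d : ℕ} (S : AssocScheme X d)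
    (R : Type) [CommRing R] (i : Fin (d + 1)) : Matrix X X R :=
  Matrix.of fun x y => if (x, y) ∈ S.rel i then 1 else 0

/-- The dual idempotent `E_i^*(x)` with respect to the base vertex `x`. -/
def AssocScheme.dualIdem {X : Type} [Fintype X] [DecidableEq X] {d : ℕ} (S : AssocScheme X d)
    (R : Type) [CommRing R] (x : X) (i : Fin (d + 1)) : Matrix X X R :=
  Matrix.of fun y z => if y = z ∧ (x, y) ∈ S.rel i then 1 else 0

/-- The Terwilliger algebra `T_R(x)`: the subalgebra of `M_X(R)` generated by the
adjacency matrices and the dual idempotents with respect to `x`. -/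
def AssocScheme.terwilliger {X : Type} [Fintype X] [DecidableEq X] {d : ℕ}
    (S : AssocScheme X d) (R : Type) [CommRing R] (x : X) :
    Subalgebra R (Matrix X X R) :=
  Algebra.adjoin R (Set.range (S.adj R) ∪ Set.range (S.dualIdem R x))

/-- The neighbourhood `xR_i = {y | (x, y) ∈ R_i}`. -/
def AssocScheme.xR {X : Type} [Fintype X] [DecidableEq X] {d : ℕ} (S : AssocScheme X d)
    (x : X) (i : Fin (d + 1)) : Finset X :=
  Finset.univ.filter fun y => (x, y) ∈ S.rel i

/-- The cardinality of the complex product `R_i R_j = {R_ℓ | p^ℓ_{ij} > 0}`. -/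
def AssocScheme.cardProd {X : Type} [Fintype X] [DecidableEq X] {d : ℕ}
    (S : AssocScheme X d) (i j : Fin (d + 1)) : ℕ :=
  ((Finset.univ.filter (fun ℓ : Fin (d + 1) => 0 < S.pnum i j ℓ)).image S.rel).card

/-- `(a, c)` is a bad pair: there are `i_b, j_b, ℓ_b` (`b ∈ [n]`) with `i_0 = a`,
`ℓ_n = c`, `k_{i_b} = k_{ℓ_b} = 2` and `p^{ℓ_b}_{i_b j_b} = 1` for all `b`,
`|R_{i_0'} R_{ℓ_n}| = 1`, and `ℓ_c = i_{c+1}` for all `c ∈ [n-1]`. -/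
def AssocScheme.badPair {X : Type} [Fintype X] [DecidableEq X] {d : ℕ}
    (S : AssocScheme X d) (a c : Fin (d + 1)) : Prop :=
  ∃ (n : ℕ) (i j l : Fin (n + 1) → Fin (d + 1)),
    i 0 = a ∧ l (Fin.last n) = c ∧
    (∀ b : Fin (n + 1), S.k (i b) = 2 ∧ S.k (l b) = 2 ∧ S.pnum (i b) (j b) (l b) = 1) ∧
    S.cardProd (S.transp (i 0)) (l (Fin.last n)) = 1 ∧
    (∀ b : Fin n, l b.castSucc = i b.succ)

/-- The relation `∼` on `A_2`: `i ∼ j` iff `(i, j) ∈ R ∪ S`, where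
`R = {(i,j) ∈ A_2 × A_2 : |R_{i'} R_j| = 2}` and `S` is the set of bad pairs. -/
def AssocScheme.sim {X : Type} [Fintype X] [DecidableEq X] {d : ℕ}
    (S : AssocScheme X d) (i j : Fin (d + 1)) : Prop :=
  S.k i = 2 ∧ S.k j = 2 ∧ (S.cardProd (S.transp i) j = 2 ∨ S.badPair i j)


/-- The basis element `b^ℓ_{ij}` of the Terwilliger algebra of a quasi-thin scheme:
for `ℓ = 0`, `b^0_{ij} = E_i^*(x) J E_j^*(x)`; for `ℓ ≠ 0` (and `i, j ∈ C_ℓ`, so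
`xR_i = {y₁ ≺ y₂}` and `xR_j = {z₁ ≺ z₂}`), `b^ℓ_{ij} = E_{y₁ z₁} + E_{y₂ z₂}`,
realized as the matrix whose `(y, z)`-entry is `1` exactly when `y ∈ xR_i`,
`z ∈ xR_j` and `y, z` occupy the same position in the orderings of `xR_i`, `xR_j`. -/
def AssocScheme.bElem {X : Type} [Fintype X] [DecidableEq X] [LinearOrder X] {d : ℕ}
    (S : AssocScheme X d) (K : Type) [Field K] (x : X) {r : ℕ}
    (l : Fin (r + 1)) (i j : Fin (d + 1)) : Matrix X X K :=
  if l = 0 then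
    Matrix.of fun y z => if (x, y) ∈ S.rel i ∧ (x, z) ∈ S.rel j then 1 else 0
  else
    Matrix.of fun y z =>
      if (x, y) ∈ S.rel i ∧ (x, z) ∈ S.rel j ∧
          ((S.xR x i).filter (fun w => w < y)).card =
            ((S.xR x j).filter (fun w => w < z)).card then 1 else 0

namespace QTCell
open Finset Matrix

variable {X : Type} [Fintype X] [DecidableEq X] {d : ℕ} (S : AssocScheme X d)

lemma rel_eq_of_mem {i j : Fin (d+1)} {p : X × X} (hi : p ∈ S.rel i) (hj : p ∈ S.rel j) :
    i = j := by
  obtain ⟨l, -, hu⟩ := S.partition p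
  rw [hu i hi, hu j hj]

lemma rel_injective {i j : Fin (d+1)} (h : S.rel i = S.rel j) : i = j := by
  obtain ⟨p, hp⟩ := S.rel_nonempty i
  exact rel_eq_of_mem S hp (h ▸ hp)

lemma mem_xR {x y : X} {i : Fin (d+1)} : y ∈ S.xR x i ↔ (x, y) ∈ S.rel i := by
  simp [AssocScheme.xR]

lemma card_xR (x : X) (i : Fin (d+1)) : (S.xR x i).card = S.k i := by
  have h0 : ((x, x) : X × X) ∈ S.rel 0 := (S.diag _).2 rfl
  have := S.pnum_spec i (S.transp i) 0 (x, x) h0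
  rw [AssocScheme.k, this]
  congr 1
  apply Finset.filter_congr
  intro z _
  simp only [S.transp_mem]
  tauto

lemma k_pos (i : Fin (d+1)) : 0 < S.k i := by
  obtain ⟨⟨u, v⟩, huv⟩ := S.rel_nonempty i
  have h0 : ((u, u) : X × X) ∈ S.rel 0 := (S.diag _).2 rfl
  have := S.pnum_spec i (S.transp i) 0 (u, u) h0
  rw [AssocScheme.k, this, Finset.card_pos]
  exact ⟨v, by simp [S.transp_mem, huv]⟩

lemma xR_nonempty (x : X) (i : Fin (d+1)) : (S.xR x i).Nonempty := by
  rw [← Finset.card_pos, card_xR]; exact k_pos S i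

lemma colcount (x : X) {j : Fin (d+1)} (i s : Fin (d+1)) {z : X} (hz : (x, z) ∈ S.rel j) :
    (Finset.univ.filter fun y : X => (x, y) ∈ S.rel i ∧ (y, z) ∈ S.rel s).card
      = S.pnum i s j :=
  (S.pnum_spec i s j (x, z) hz).symm

lemma rowcount (x : X) {i : Fin (d+1)} (s j : Fin (d+1)) {y : X} (hy : (x, y) ∈ S.rel i) :
    (Finset.univ.filter fun z : X => (x, z) ∈ S.rel j ∧ (y, z) ∈ S.rel s).card
      = S.pnum s (S.transp j) (S.transp i) := by
  have hq : ((y, x) : X × X) ∈ S.rel (S.transp i) := (S.transp_mem i (y, x)).2 hy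
  rw [S.pnum_spec s (S.transp j) (S.transp i) (y, x) hq]
  congr 1
  apply Finset.filter_congr
  intro z _
  simp only [S.transp_mem]
  tauto

lemma count_sym (x : X) (i s j : Fin (d+1)) :
    S.k j * S.pnum i s j = S.k i * S.pnum s (S.transp j) (S.transp i) := by
  have key : ∀ (F : X → X → ℕ), (∑ z : X, ∑ y : X, F y z) = ∑ y : X, ∑ z : X, F y z :=
    fun F => Finset.sum_comm
  set F : X → X → ℕ := fun y z =>
    if (x, y) ∈ S.rel i ∧ (x, z) ∈ S.rel j ∧ (y, z) ∈ S.rel s then 1 else 0 with hF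
  have hcol : (∑ z : X, ∑ y : X, F y z) = S.k j * S.pnum i s j := by
    have : ∀ z : X, (∑ y : X, F y z) =
        if (x, z) ∈ S.rel j then S.pnum i s j else 0 := by
      intro z
      by_cases hz : (x, z) ∈ S.rel j
      · rw [if_pos hz, ← colcount S x i s hz, Finset.card_filter]
        apply Finset.sum_congr rfl
        intro y _
        simp [hF, hz, and_assoc, and_comm]
      · simp [hF, hz]
    rw [Finset.sum_congr rfl fun z _ => this z, ← Finset.sum_filter, Finset.sum_const,
      smul_eq_mul,
      show Finset.univ.filter (fun z : X => (x, z) ∈ S.rel j) = S.xR x j from rfl, card_xR]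
  have hrow : (∑ y : X, ∑ z : X, F y z) =
      S.k i * S.pnum s (S.transp j) (S.transp i) := by
    have : ∀ y : X, (∑ z : X, F y z) =
        if (x, y) ∈ S.rel i then S.pnum s (S.transp j) (S.transp i) else 0 := by
      intro y
      by_cases hy : (x, y) ∈ S.rel i
      · rw [if_pos hy, ← rowcount S x s j hy, Finset.card_filter]
        apply Finset.sum_congr rfl
        intro z _
        simp [hF, hy]
      · simp [hF, hy]
    rw [Finset.sum_congr rfl fun y _ => this y, ← Finset.sum_filter, Finset.sum_const,
      smul_eq_mul,
      show Finset.univ.filter (fun y : X => (x, y) ∈ S.rel i) = S.xR x i from rfl, card_xR]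
  rw [← hcol, ← hrow, key]

lemma pnum_pos_iff (i ℓ j : Fin (d+1)) :
    0 < S.pnum (S.transp i) j ℓ ↔ 0 < S.pnum i ℓ j := by
  constructor
  · intro h
    obtain ⟨q, hq⟩ := S.rel_nonempty ℓ
    rw [S.pnum_spec _ _ _ q hq, Finset.card_pos] at h
    obtain ⟨w, hw⟩ := h
    rw [Finset.mem_filter] at hw
    obtain ⟨-, hw1, hw2⟩ := hw
    rw [S.pnum_spec i ℓ j (w, q.2) hw2, Finset.card_pos]
    refine ⟨q.1, ?_⟩
    rw [Finset.mem_filter]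
    exact ⟨Finset.mem_univ _, (S.transp_mem i (q.1, w)).1 hw1, hq⟩
  · intro h
    obtain ⟨q, hq⟩ := S.rel_nonempty j
    rw [S.pnum_spec _ _ _ q hq, Finset.card_pos] at h
    obtain ⟨w, hw⟩ := h
    rw [Finset.mem_filter] at hw
    obtain ⟨-, hw1, hw2⟩ := hw
    rw [S.pnum_spec (S.transp i) j ℓ (w, q.2) hw2, Finset.card_pos]
    refine ⟨q.1, ?_⟩
    rw [Finset.mem_filter]
    exact ⟨Finset.mem_univ _, (S.transp_mem i (w, q.1)).2 hw1, hq⟩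

lemma sum_ite_rel (p : X × X) : (∑ ℓ : Fin (d+1), if p ∈ S.rel ℓ then (1:ℕ) else 0) = 1 := by
  obtain ⟨ℓ0, h0, hu⟩ := S.partition p
  rw [Finset.sum_eq_single ℓ0]
  · rw [if_pos h0]
  · intro b _ hb
    rw [if_neg (fun hmem => hb (hu b hmem))]
  · intro h; exact absurd (Finset.mem_univ ℓ0) h

lemma sum_pnum {x z : X} (i : Fin (d+1)) {j : Fin (d+1)} (hz : (x, z) ∈ S.rel j) :
    (∑ ℓ : Fin (d+1), S.pnum i ℓ j) = S.k i := by
  have : ∀ ℓ, S.pnum i ℓ j =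
      ∑ y : X, if (x, y) ∈ S.rel i then (if (y, z) ∈ S.rel ℓ then 1 else 0) else 0 := by
    intro ℓ
    rw [← colcount S x i ℓ hz, Finset.card_filter]
    apply Finset.sum_congr rfl
    intro y _
    by_cases h1 : (x, y) ∈ S.rel i <;> by_cases h2 : (y, z) ∈ S.rel ℓ <;> simp [h1, h2]
  rw [Finset.sum_congr rfl fun ℓ _ => this ℓ, Finset.sum_comm]
  rw [← card_xR S x i,
    show S.xR x i = Finset.univ.filter (fun y : X => (x, y) ∈ S.rel i) from rfl,
    Finset.card_filter]
  apply Finset.sum_congr rfl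
  intro y _
  by_cases h1 : (x, y) ∈ S.rel i
  · simp only [if_pos h1, sum_ite_rel S (y, z)]
  · simp [h1]

end QTCell
set_option linter.unusedSectionVars false

section PosLemmas
open Finset

variable {X : Type} [DecidableEq X] [LinearOrder X]

lemma pos_lt_of_lt {s : Finset X} {y y' : X} (hy : y ∈ s) (hlt : y < y') :
    (s.filter (· < y)).card < (s.filter (· < y')).card := by
  apply Finset.card_lt_card
  constructor
  · intro w hw
    rw [Finset.mem_filter] at hw ⊢
    exact ⟨hw.1, hw.2.trans hlt⟩
  · intro hsub
    have := hsub (Finset.mem_filter.2 ⟨hy, hlt⟩)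
    rw [Finset.mem_filter] at this
    exact lt_irrefl y this.2

lemma pos_injOn {s : Finset X} {y y' : X} (hy : y ∈ s) (hy' : y' ∈ s)
    (h : (s.filter (· < y)).card = (s.filter (· < y')).card) : y = y' := by
  rcases lt_trichotomy y y' with hlt | heq | hlt
  · exact absurd h (Nat.ne_of_lt (pos_lt_of_lt hy hlt))
  · exact heq
  · exact absurd h.symm (Nat.ne_of_lt (pos_lt_of_lt hy' hlt))

lemma pos_lt_card {s : Finset X} {y : X} (hy : y ∈ s) :
    (s.filter (· < y)).card < s.card := by
  apply Finset.card_lt_card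
  refine ⟨Finset.filter_subset _ _, fun hsub => ?_⟩
  have := hsub hy
  rw [Finset.mem_filter] at this
  exact lt_irrefl y this.2

lemma pos_surj {s : Finset X} {n : ℕ} (hn : n < s.card) :
    ∃ y ∈ s, (s.filter (· < y)).card = n := by
  have := Finset.surj_on_of_inj_on_of_card_le
    (s := s) (t := Finset.range s.card)
    (fun a _ => (s.filter (· < a)).card)
    (fun a ha => Finset.mem_range.2 (pos_lt_card ha))
    (fun a₁ a₂ ha₁ ha₂ h => pos_injOn ha₁ ha₂ h)
    (by rw [Finset.card_range])
  obtain ⟨a, ha, hfa⟩ := this n (Finset.mem_range.2 hn)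
  exact ⟨a, ha, hfa.symm⟩

lemma card_pos_filter (s : Finset X) (n : ℕ) (hn : n < s.card) :
    (s.filter fun w => (s.filter (· < w)).card = n).card = 1 := by
  rw [Finset.card_eq_one]
  obtain ⟨y, hy, hpy⟩ := pos_surj hn
  refine ⟨y, ?_⟩
  ext w
  rw [Finset.mem_filter, Finset.mem_singleton]
  constructor
  · rintro ⟨hw, hpw⟩
    exact pos_injOn hw hy (hpw.trans hpy.symm)
  · rintro rfl
    exact ⟨hy, hpy⟩

end PosLemmas

namespace QTCell
open Finset Matrix

variable {X : Type} [Fintype X] [DecidableEq X] [LinearOrder X] {d : ℕ}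
  (S : AssocScheme X d) (K : Type) [Field K] (x : X)

/-- The all-ones block `E_i^* J E_j^*`. -/
def MJ (i j : Fin (d+1)) : Matrix X X K :=
  Matrix.of fun y z => if (x, y) ∈ S.rel i ∧ (x, z) ∈ S.rel j then 1 else 0

/-- The "matching" permutation block. -/
def MP (i j : Fin (d+1)) : Matrix X X K :=
  Matrix.of fun y z =>
    if (x, y) ∈ S.rel i ∧ (x, z) ∈ S.rel j ∧
        ((S.xR x i).filter (fun w => w < y)).card =
          ((S.xR x j).filter (fun w => w < z)).card then 1 else 0

lemma bElem_zero {r : ℕ} (i j : Fin (d+1)) :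
    S.bElem K x (0 : Fin (r+1)) i j = MJ S K x i j := by
  rw [AssocScheme.bElem, if_pos rfl]; rfl

lemma bElem_ne {r : ℕ} {l : Fin (r+1)} (hl : l ≠ 0) (i j : Fin (d+1)) :
    S.bElem K x l i j = MP S K x i j := by
  rw [AssocScheme.bElem, if_neg hl]; rfl

lemma ite_mul_ite (A B : Prop) [Decidable A] [Decidable B] :
    (if A then (1:K) else 0) * (if B then 1 else 0) = if A ∧ B then 1 else 0 := by
  by_cases hA : A <;> by_cases hB : B <;> simp [hA, hB]

lemma dualIdem_eq_diagonal (i : Fin (d+1)) :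
    S.dualIdem K x i = Matrix.diagonal (fun y => if (x, y) ∈ S.rel i then (1:K) else 0) := by
  ext y z
  rw [AssocScheme.dualIdem, Matrix.diagonal_apply]
  by_cases h : y = z
  · subst h; by_cases h2 : (x, y) ∈ S.rel i <;> simp [h2]
  · simp [h]

lemma dual_mul_apply (i : Fin (d+1)) (N : Matrix X X K) (y z : X) :
    (S.dualIdem K x i * N) y z = if (x, y) ∈ S.rel i then N y z else 0 := by
  rw [dualIdem_eq_diagonal, Matrix.diagonal_mul]
  by_cases h : (x, y) ∈ S.rel i <;> simp [h]

lemma mul_dual_apply (j : Fin (d+1)) (N : Matrix X X K) (y z : X) :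
    (N * S.dualIdem K x j) y z = if (x, z) ∈ S.rel j then N y z else 0 := by
  rw [dualIdem_eq_diagonal, Matrix.mul_diagonal]
  by_cases h : (x, z) ∈ S.rel j <;> simp [h, mul_comm]

lemma sum_ite_rel_K (p : X × X) :
    (∑ ℓ : Fin (d+1), if p ∈ S.rel ℓ then (1:K) else 0) = 1 := by
  obtain ⟨ℓ0, h0, hu⟩ := S.partition p
  rw [Finset.sum_eq_single ℓ0]
  · rw [if_pos h0]
  · intro b _ hb
    rw [if_neg (fun hmem => hb (hu b hmem))]
  · intro h; exact absurd (Finset.mem_univ ℓ0) h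

lemma sum_dualIdem : (∑ i : Fin (d+1), S.dualIdem K x i) = 1 := by
  ext y z
  rw [Matrix.sum_apply]
  by_cases h : y = z
  · subst h
    simp only [AssocScheme.dualIdem, Matrix.of_apply, true_and, Matrix.one_apply_eq]
    exact sum_ite_rel_K S K (x, y)
  · simp [AssocScheme.dualIdem, h, Matrix.one_apply_ne h]

/-- The block `E_i^* A_s E_j^*`. -/
def EAE (i s j : Fin (d+1)) : Matrix X X K :=
  S.dualIdem K x i * S.adj K s * S.dualIdem K x j

lemma EAE_apply (i s j : Fin (d+1)) (y z : X) :
    EAE S K x i s j y z =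
      if (x, y) ∈ S.rel i ∧ (y, z) ∈ S.rel s ∧ (x, z) ∈ S.rel j then 1 else 0 := by
  rw [EAE, mul_dual_apply, dual_mul_apply]
  by_cases h1 : (x, y) ∈ S.rel i <;> by_cases h2 : (y, z) ∈ S.rel s <;>
    by_cases h3 : (x, z) ∈ S.rel j <;> simp [h1, h2, h3, AssocScheme.adj]

lemma sum_EAE (i j : Fin (d+1)) :
    (∑ s : Fin (d+1), EAE S K x i s j) = MJ S K x i j := by
  ext y z
  rw [Matrix.sum_apply]
  simp only [EAE_apply]
  by_cases h1 : (x, y) ∈ S.rel i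
  · by_cases h3 : (x, z) ∈ S.rel j
    · have : ∀ s : Fin (d+1),
          (if (x, y) ∈ S.rel i ∧ (y, z) ∈ S.rel s ∧ (x, z) ∈ S.rel j then (1:K) else 0)
            = if (y, z) ∈ S.rel s then 1 else 0 := by
        intro s; by_cases hs : (y, z) ∈ S.rel s <;> simp [h1, h3, hs]
      rw [Finset.sum_congr rfl fun s _ => this s, sum_ite_rel_K S K (y, z)]
      simp [MJ, h1, h3]
    · simp [MJ, h3]
  · simp [MJ, h1]

lemma adj_mem (s : Fin (d+1)) : S.adj K s ∈ S.terwilliger K x :=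
  Algebra.subset_adjoin (Set.mem_union_left _ ⟨s, rfl⟩)

lemma dualIdem_mem (i : Fin (d+1)) : S.dualIdem K x i ∈ S.terwilliger K x :=
  Algebra.subset_adjoin (Set.mem_union_right _ ⟨i, rfl⟩)

lemma EAE_mem (i s j : Fin (d+1)) : EAE S K x i s j ∈ S.terwilliger K x :=
  mul_mem (mul_mem (dualIdem_mem S K x i) (adj_mem S K x s)) (dualIdem_mem S K x j)

lemma MJ_mem (i j : Fin (d+1)) : MJ S K x i j ∈ S.terwilliger K x := by
  rw [← sum_EAE]
  exact Subalgebra.sum_mem _ fun s _ => EAE_mem S K x i s j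

lemma adj_transpose (s : Fin (d+1)) :
    (S.adj K s)ᵀ = S.adj K (S.transp s) := by
  ext y z
  rw [Matrix.transpose_apply]
  simp only [AssocScheme.adj, Matrix.of_apply]
  exact if_congr (S.transp_mem s (y, z)).symm rfl rfl

lemma dualIdem_transpose (i : Fin (d+1)) :
    (S.dualIdem K x i)ᵀ = S.dualIdem K x i := by
  ext y z
  rw [Matrix.transpose_apply]
  simp only [AssocScheme.dualIdem, Matrix.of_apply]
  by_cases h : y = z
  · subst h; rfl
  · have h' : z ≠ y := fun e => h e.symm
    simp [h, h']

lemma transpose_mem {M : Matrix X X K} (hM : M ∈ S.terwilliger K x) :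
    Mᵀ ∈ S.terwilliger K x := by
  induction hM using Algebra.adjoin_induction with
  | mem a ha =>
    rcases ha with ⟨s, rfl⟩ | ⟨i, rfl⟩
    · rw [adj_transpose]; exact adj_mem S K x _
    · rw [dualIdem_transpose]; exact dualIdem_mem S K x _
  | algebraMap r =>
    rw [show (algebraMap K (Matrix X X K)) r = r • 1 from Algebra.algebraMap_eq_smul_one r,
      Matrix.transpose_smul, Matrix.transpose_one]
    exact Subalgebra.smul_mem _ (Subalgebra.one_mem _) r
  | add a b _ _ ha hb => rw [Matrix.transpose_add]; exact add_mem ha hb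
  | mul a b _ _ ha hb => rw [Matrix.transpose_mul]; exact mul_mem hb ha

lemma MJ_transpose (i j : Fin (d+1)) : (MJ S K x i j)ᵀ = MJ S K x j i := by
  ext y z
  rw [Matrix.transpose_apply]
  simp only [MJ, Matrix.of_apply]
  exact if_congr and_comm rfl rfl

lemma MP_transpose (i j : Fin (d+1)) : (MP S K x i j)ᵀ = MP S K x j i := by
  ext y z
  rw [Matrix.transpose_apply]
  simp only [MP, Matrix.of_apply]
  refine if_congr ⟨?_, ?_⟩ rfl rfl
  · rintro ⟨h1, h2, h3⟩; exact ⟨h2, h1, h3.symm⟩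
  · rintro ⟨h1, h2, h3⟩; exact ⟨h2, h1, h3.symm⟩

end QTCell
namespace QTCell
open Finset Matrix

variable {X : Type} [Fintype X] [DecidableEq X] [LinearOrder X] {d : ℕ}
  (S : AssocScheme X d) (K : Type) [Field K] (x : X)

lemma mem_pair_of_card_two {s : Finset X} (h : s.card = 2) {a b c : X} (ha : a ∈ s)
    (hb : b ∈ s) (hc : c ∈ s) (hab : a ≠ b) : c = a ∨ c = b := by
  obtain ⟨u, v, huv, rfl⟩ := Finset.card_eq_two.1 h
  simp only [Finset.mem_insert, Finset.mem_singleton] at ha hb hc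
  rcases ha with rfl | rfl <;> rcases hb with rfl | rfl <;> rcases hc with rfl | rfl <;> tauto

lemma zero_block {i s j : Fin (d+1)} (h : S.pnum i s j = 0) : EAE S K x i s j = 0 := by
  ext y z
  rw [EAE_apply, Matrix.zero_apply, if_neg]
  rintro ⟨hy, hs, hz⟩
  have hcard := colcount S x i s hz
  rw [h, Finset.card_eq_zero] at hcard
  have hmem : y ∈ Finset.univ.filter fun y' : X => (x, y') ∈ S.rel i ∧ (y', z) ∈ S.rel s :=
    Finset.mem_filter.2 ⟨Finset.mem_univ y, hy, hs⟩
  rw [hcard] at hmem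
  exact absurd hmem (Finset.notMem_empty y)

lemma full_block {i s j : Fin (d+1)} (h : S.pnum i s j = S.k i) :
    EAE S K x i s j = MJ S K x i j := by
  ext y z
  rw [EAE_apply]
  simp only [MJ, Matrix.of_apply]
  refine if_congr ⟨fun h' => ⟨h'.1, h'.2.2⟩, ?_⟩ rfl rfl
  rintro ⟨hy, hz⟩
  refine ⟨hy, ?_, hz⟩
  have hcard := colcount S x i s hz
  have hsub : (Finset.univ.filter fun y' : X => (x, y') ∈ S.rel i ∧ (y', z) ∈ S.rel s)
      ⊆ S.xR x i := by
    intro w hw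
    rw [Finset.mem_filter] at hw
    exact (mem_xR S).2 hw.2.1
  have heq := Finset.eq_of_subset_of_card_le hsub (by rw [hcard, h, card_xR])
  have hmem : y ∈ (Finset.univ.filter fun y' : X => (x, y') ∈ S.rel i ∧ (y', z) ∈ S.rel s) := by
    rw [heq]; exact (mem_xR S).2 hy
  exact (Finset.mem_filter.1 hmem).2.2

lemma perm_block {i s j : Fin (d+1)} (hki : S.k i = 2) (hkj : S.k j = 2)
    (h1 : S.pnum i s j = 1) :
    EAE S K x i s j = MP S K x i j ∨ EAE S K x i s j = MJ S K x i j - MP S K x i j := by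
  have hr : S.pnum s (S.transp j) (S.transp i) = 1 := by
    have := count_sym S x i s j
    rw [hki, hkj, h1] at this
    omega
  have colU : ∀ z : X, (x, z) ∈ S.rel j →
      ∃! y : X, (x, y) ∈ S.rel i ∧ (y, z) ∈ S.rel s := by
    intro z hz
    obtain ⟨a, ha⟩ := Finset.card_eq_one.1 ((colcount S x i s hz).trans h1)
    refine ⟨a, ?_, ?_⟩
    · have : a ∈ Finset.univ.filter fun y : X => (x, y) ∈ S.rel i ∧ (y, z) ∈ S.rel s := by
        rw [ha]; exact Finset.mem_singleton_self a
      exact (Finset.mem_filter.1 this).2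
    · intro y hy
      have : y ∈ ({a} : Finset X) := by
        rw [← ha]; exact Finset.mem_filter.2 ⟨Finset.mem_univ y, hy⟩
      exact Finset.mem_singleton.1 this
  have rowU : ∀ y : X, (x, y) ∈ S.rel i →
      ∃! z : X, (x, z) ∈ S.rel j ∧ (y, z) ∈ S.rel s := by
    intro y hy
    obtain ⟨a, ha⟩ := Finset.card_eq_one.1 ((rowcount S x s j hy).trans hr)
    refine ⟨a, ?_, ?_⟩
    · have : a ∈ Finset.univ.filter fun z : X => (x, z) ∈ S.rel j ∧ (y, z) ∈ S.rel s := by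
        rw [ha]; exact Finset.mem_singleton_self a
      exact (Finset.mem_filter.1 this).2
    · intro z hz
      have : z ∈ ({a} : Finset X) := by
        rw [← ha]; exact Finset.mem_filter.2 ⟨Finset.mem_univ z, hz⟩
      exact Finset.mem_singleton.1 this
  have cardxj : (S.xR x j).card = 2 := by rw [card_xR, hkj]
  have cardxi : (S.xR x i).card = 2 := by rw [card_xR, hki]
  have key : ∀ y y' z z' : X, (x, y) ∈ S.rel i → (x, y') ∈ S.rel i →
      (x, z) ∈ S.rel j → (x, z') ∈ S.rel j → (y, z) ∈ S.rel s →
      ((y', z') ∈ S.rel s ↔ (y = y' ↔ z = z')) := by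
    intro y y' z z' hy hy' hz hz' hs
    by_cases hyy : y = y'
    · subst hyy
      by_cases hzz : z = z'
      · subst hzz; simp [hs]
      · constructor
        · intro hs'
          exfalso
          obtain ⟨w, -, hwu⟩ := rowU y hy
          exact hzz ((hwu z ⟨hz, hs⟩).trans (hwu z' ⟨hz', hs'⟩).symm)
        · intro hiff
          exact absurd (hiff.1 rfl) hzz
    · by_cases hzz : z = z'
      · subst hzz
        constructor
        · intro hs'
          exfalso
          obtain ⟨w, -, hwu⟩ := colU z hz
          exact hyy ((hwu y ⟨hy, hs⟩).trans (hwu y' ⟨hy', hs'⟩).symm)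
        · intro hiff
          exact absurd (hiff.2 rfl) hyy
      · have hs' : (y', z') ∈ S.rel s := by
          obtain ⟨w, hw, -⟩ := rowU y' hy'
          have hwz : w ≠ z := by
            rintro rfl
            obtain ⟨a, -, hau⟩ := colU w hw.1
            exact hyy ((hau y ⟨hy, hs⟩).trans (hau y' ⟨hy', hw.2⟩).symm)
          rcases mem_pair_of_card_two cardxj ((mem_xR S).2 hz) ((mem_xR S).2 hz')
              ((mem_xR S).2 hw.1) hzz with hwc | hwc
          · exact absurd hwc hwz
          · rw [← hwc]; exact hw.2
        simp [hs', hyy, hzz]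
  obtain ⟨z0, hz0mem, hz0pos⟩ := pos_surj (show 0 < (S.xR x j).card by omega)
  have hz0 : (x, z0) ∈ S.rel j := (mem_xR S).1 hz0mem
  obtain ⟨y0, hy0, -⟩ := colU z0 hz0
  have hpylt : ((S.xR x i).filter (· < y0)).card < 2 := by
    rw [← cardxi]; exact pos_lt_card ((mem_xR S).2 hy0.1)
  have entry : ∀ y z : X, (x, y) ∈ S.rel i → (x, z) ∈ S.rel j →
      ((y, z) ∈ S.rel s ↔
        (((S.xR x i).filter (· < y)).card = ((S.xR x i).filter (· < y0)).card ↔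
          ((S.xR x j).filter (· < z)).card = 0)) := by
    intro y z hy hz
    rw [key y0 y z0 z hy0.1 hy hz0 hz hy0.2]
    constructor
    · rintro ⟨f, g⟩
      constructor
      · intro hp
        have : y0 = y := pos_injOn ((mem_xR S).2 hy0.1) ((mem_xR S).2 hy) hp.symm
        rw [← (f this), hz0pos]
      · intro hp
        have : z0 = z := pos_injOn hz0mem ((mem_xR S).2 hz) (hz0pos.trans hp.symm)
        rw [g this]
    · rintro ⟨f, g⟩
      constructor
      · rintro rfl
        exact pos_injOn hz0mem ((mem_xR S).2 hz) (hz0pos.trans (f rfl).symm)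
      · rintro rfl
        exact pos_injOn ((mem_xR S).2 hy0.1) ((mem_xR S).2 hy) (g hz0pos).symm
  by_cases hpy : ((S.xR x i).filter (· < y0)).card = 0
  · left
    ext y z
    rw [EAE_apply]
    simp only [MP, Matrix.of_apply]
    by_cases hy : (x, y) ∈ S.rel i
    · by_cases hz : (x, z) ∈ S.rel j
      · have hylt : ((S.xR x i).filter (· < y)).card < 2 := by
          rw [← cardxi]; exact pos_lt_card ((mem_xR S).2 hy)
        have hzlt : ((S.xR x j).filter (· < z)).card < 2 := by
          rw [← cardxj]; exact pos_lt_card ((mem_xR S).2 hz)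
        refine if_congr ⟨?_, ?_⟩ rfl rfl
        · rintro ⟨-, hsmem, -⟩
          refine ⟨hy, hz, ?_⟩
          obtain ⟨f, g⟩ := (entry y z hy hz).1 hsmem
          by_cases ha : ((S.xR x i).filter (· < y)).card = 0
          · have := f (by omega); omega
          · have : ¬ ((S.xR x j).filter (· < z)).card = 0 := fun hb => by
              have := g hb; omega
            omega
        · rintro ⟨-, -, hposeq⟩
          refine ⟨hy, (entry y z hy hz).2 ⟨fun h' => by omega, fun h' => by omega⟩, hz⟩
      · simp [hz]
    · simp [hy]
  · right
    have hpy1 : ((S.xR x i).filter (· < y0)).card = 1 := by omega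
    ext y z
    rw [Matrix.sub_apply, EAE_apply]
    simp only [MP, MJ, Matrix.of_apply]
    by_cases hy : (x, y) ∈ S.rel i
    · by_cases hz : (x, z) ∈ S.rel j
      · have hylt : ((S.xR x i).filter (· < y)).card < 2 := by
          rw [← cardxi]; exact pos_lt_card ((mem_xR S).2 hy)
        have hzlt : ((S.xR x j).filter (· < z)).card < 2 := by
          rw [← cardxj]; exact pos_lt_card ((mem_xR S).2 hz)
        have hiff : (y, z) ∈ S.rel s ↔
            ¬ ((S.xR x i).filter (· < y)).card = ((S.xR x j).filter (· < z)).card := by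
          rw [entry y z hy hz]
          constructor
          · rintro ⟨f, g⟩ hcon
            by_cases ha : ((S.xR x i).filter (· < y)).card = 1
            · have := f (by omega); omega
            · have hb : ¬ ((S.xR x j).filter (· < z)).card = 0 := by omega
              have : ¬ ((S.xR x i).filter (· < y)).card = 1 := fun h' => hb (by
                have := f (by omega); exact this)
              omega
          · intro hne
            constructor
            · intro h'; omega
            · intro h'; omega
        by_cases hsm : (y, z) ∈ S.rel s
        · rw [if_pos ⟨hy, hsm, hz⟩, if_pos ⟨hy, hz⟩, if_neg, sub_zero]
          rintro ⟨-, -, hc⟩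
          exact (hiff.1 hsm) hc
        · rw [if_neg (fun hc => hsm hc.2.1), if_pos ⟨hy, hz⟩, if_pos, sub_self]
          refine ⟨hy, hz, ?_⟩
          by_contra hc
          exact hsm (hiff.2 hc)
      · simp [hz]
    · simp [hy]

end QTCell
namespace QTCell
open Finset Matrix

variable {X : Type} [Fintype X] [DecidableEq X] [LinearOrder X] {d : ℕ}
  (S : AssocScheme X d) (K : Type) [Field K] (x : X)

lemma MJ_mul_MJ (i j u v : Fin (d+1)) :
    MJ S K x i j * MJ S K x u v = (if j = u then (S.k j : K) else 0) • MJ S K x i v := by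
  ext y z
  rw [Matrix.mul_apply]
  simp only [MJ, Matrix.of_apply]
  rw [Finset.sum_congr rfl fun w _ => ite_mul_ite K _ _, Finset.sum_boole]
  by_cases hju : j = u
  · subst hju
    by_cases hy : (x, y) ∈ S.rel i
    · by_cases hz : (x, z) ∈ S.rel v
      · have : (Finset.univ.filter fun w : X =>
            ((x, y) ∈ S.rel i ∧ (x, w) ∈ S.rel j) ∧ (x, w) ∈ S.rel j ∧ (x, z) ∈ S.rel v)
            = S.xR x j := by
          ext w
          simp [AssocScheme.xR, hy, hz]
        rw [this, card_xR]
        simp [hy, hz]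
      · have : (Finset.univ.filter fun w : X =>
            ((x, y) ∈ S.rel i ∧ (x, w) ∈ S.rel j) ∧ (x, w) ∈ S.rel j ∧ (x, z) ∈ S.rel v)
            = ∅ := by
          ext w; simp [hz]
        rw [this]
        simp [hz]
    · have : (Finset.univ.filter fun w : X =>
          ((x, y) ∈ S.rel i ∧ (x, w) ∈ S.rel j) ∧ (x, w) ∈ S.rel j ∧ (x, z) ∈ S.rel v)
          = ∅ := by
        ext w; simp [hy]
      rw [this]
      simp [hy]
  · have : (Finset.univ.filter fun w : X =>
        ((x, y) ∈ S.rel i ∧ (x, w) ∈ S.rel j) ∧ (x, w) ∈ S.rel u ∧ (x, z) ∈ S.rel v)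
        = ∅ := by
      ext w
      simp only [Finset.mem_filter, Finset.mem_univ, true_and, Finset.notMem_empty,
        iff_false]
      rintro ⟨⟨-, hwj⟩, hwu, -⟩
      exact hju (rel_eq_of_mem S hwj hwu)
    rw [this]
    simp [hju]

lemma MP_mul_MP {i j u v : Fin (d+1)} (hki : S.k i = 2) (hkj : S.k j = 2) :
    MP S K x i j * MP S K x u v = if j = u then MP S K x i v else 0 := by
  ext y z
  rw [Matrix.mul_apply]
  simp only [MP, Matrix.of_apply]
  rw [Finset.sum_congr rfl fun w _ => ite_mul_ite K _ _, Finset.sum_boole]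
  by_cases hju : j = u
  · subst hju
    rw [if_pos rfl]
    by_cases hcond : (x, y) ∈ S.rel i ∧ (x, z) ∈ S.rel v ∧
        ((S.xR x i).filter (fun w => w < y)).card = ((S.xR x v).filter (fun w => w < z)).card
    · obtain ⟨hy, hz, hpos⟩ := hcond
      have hlt : ((S.xR x i).filter (fun w => w < y)).card < (S.xR x j).card := by
        have := pos_lt_card ((mem_xR S).2 hy)
        rw [card_xR, hki] at this
        rw [card_xR, hkj]
        omega
      have heq : (Finset.univ.filter fun w : X =>
          ((x, y) ∈ S.rel i ∧ (x, w) ∈ S.rel j ∧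
            ((S.xR x i).filter (fun w' => w' < y)).card =
              ((S.xR x j).filter (fun w' => w' < w)).card) ∧
          (x, w) ∈ S.rel j ∧ (x, z) ∈ S.rel v ∧
            ((S.xR x j).filter (fun w' => w' < w)).card =
              ((S.xR x v).filter (fun w' => w' < z)).card)
          = (S.xR x j).filter fun w =>
              ((S.xR x j).filter (· < w)).card =
                ((S.xR x i).filter (fun w' => w' < y)).card := by
        ext w
        simp only [Finset.mem_filter, Finset.mem_univ, true_and, mem_xR]
        constructor
        · rintro ⟨⟨-, hwj, hp1⟩, -⟩
          exact ⟨hwj, hp1.symm⟩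
        · rintro ⟨hwj, hp⟩
          exact ⟨⟨hy, hwj, hp.symm⟩, hwj, hz, hp.trans hpos⟩
      rw [heq, card_pos_filter _ _ hlt]
      simp [hy, hz, hpos]
    · have heq : (Finset.univ.filter fun w : X =>
          ((x, y) ∈ S.rel i ∧ (x, w) ∈ S.rel j ∧
            ((S.xR x i).filter (fun w' => w' < y)).card =
              ((S.xR x j).filter (fun w' => w' < w)).card) ∧
          (x, w) ∈ S.rel j ∧ (x, z) ∈ S.rel v ∧
            ((S.xR x j).filter (fun w' => w' < w)).card =
              ((S.xR x v).filter (fun w' => w' < z)).card) = ∅ := by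
        ext w
        simp only [Finset.mem_filter, Finset.mem_univ, true_and, Finset.notMem_empty,
          iff_false]
        rintro ⟨⟨hy, -, hp1⟩, -, hz, hp2⟩
        exact hcond ⟨hy, hz, hp1.trans hp2⟩
      rw [heq]
      simp [hcond]
  · rw [if_neg hju]
    have heq : (Finset.univ.filter fun w : X =>
        ((x, y) ∈ S.rel i ∧ (x, w) ∈ S.rel j ∧
          ((S.xR x i).filter (fun w' => w' < y)).card =
            ((S.xR x j).filter (fun w' => w' < w)).card) ∧
        (x, w) ∈ S.rel u ∧ (x, z) ∈ S.rel v ∧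
          ((S.xR x u).filter (fun w' => w' < w)).card =
            ((S.xR x v).filter (fun w' => w' < z)).card) = ∅ := by
      ext w
      simp only [Finset.mem_filter, Finset.mem_univ, true_and, Finset.notMem_empty,
        iff_false]
      rintro ⟨⟨-, hwj, -⟩, hwu, -⟩
      exact hju (rel_eq_of_mem S hwj hwu)
    rw [heq]
    simp

lemma MJ_mul_MP {i j u v : Fin (d+1)} (hku : S.k u = 2) (hkv : S.k v = 2) :
    MJ S K x i j * MP S K x u v = if j = u then MJ S K x i v else 0 := by
  ext y z
  rw [Matrix.mul_apply]
  simp only [MJ, MP, Matrix.of_apply]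
  rw [Finset.sum_congr rfl fun w _ => ite_mul_ite K _ _, Finset.sum_boole]
  by_cases hju : j = u
  · subst hju
    rw [if_pos rfl]
    by_cases hy : (x, y) ∈ S.rel i
    · by_cases hz : (x, z) ∈ S.rel v
      · have hlt : ((S.xR x v).filter (fun w => w < z)).card < (S.xR x j).card := by
          have := pos_lt_card ((mem_xR S).2 hz)
          rw [card_xR, hkv] at this
          rw [card_xR, hku]
          omega
        have heq : (Finset.univ.filter fun w : X =>
            ((x, y) ∈ S.rel i ∧ (x, w) ∈ S.rel j) ∧
            (x, w) ∈ S.rel j ∧ (x, z) ∈ S.rel v ∧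
              ((S.xR x j).filter (fun w' => w' < w)).card =
                ((S.xR x v).filter (fun w' => w' < z)).card)
            = (S.xR x j).filter fun w =>
                ((S.xR x j).filter (· < w)).card =
                  ((S.xR x v).filter (fun w' => w' < z)).card := by
          ext w
          simp only [Finset.mem_filter, Finset.mem_univ, true_and, mem_xR]
          constructor
          · rintro ⟨⟨-, hwj⟩, -, -, hp⟩
            exact ⟨hwj, hp⟩
          · rintro ⟨hwj, hp⟩
            exact ⟨⟨hy, hwj⟩, hwj, hz, hp⟩
        rw [heq, card_pos_filter _ _ hlt]
        simp [hy, hz]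
      · have heq : (Finset.univ.filter fun w : X =>
            ((x, y) ∈ S.rel i ∧ (x, w) ∈ S.rel j) ∧
            (x, w) ∈ S.rel j ∧ (x, z) ∈ S.rel v ∧
              ((S.xR x j).filter (fun w' => w' < w)).card =
                ((S.xR x v).filter (fun w' => w' < z)).card) = ∅ := by
          ext w; simp [hz]
        rw [heq]
        simp [hz]
    · have heq : (Finset.univ.filter fun w : X =>
          ((x, y) ∈ S.rel i ∧ (x, w) ∈ S.rel j) ∧
          (x, w) ∈ S.rel j ∧ (x, z) ∈ S.rel v ∧
            ((S.xR x j).filter (fun w' => w' < w)).card =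
              ((S.xR x v).filter (fun w' => w' < z)).card) = ∅ := by
        ext w; simp [hy]
      rw [heq]
      simp [hy]
  · rw [if_neg hju]
    have heq : (Finset.univ.filter fun w : X =>
        ((x, y) ∈ S.rel i ∧ (x, w) ∈ S.rel j) ∧
        (x, w) ∈ S.rel u ∧ (x, z) ∈ S.rel v ∧
          ((S.xR x u).filter (fun w' => w' < w)).card =
            ((S.xR x v).filter (fun w' => w' < z)).card) = ∅ := by
      ext w
      simp only [Finset.mem_filter, Finset.mem_univ, true_and, Finset.notMem_empty,
        iff_false]
      rintro ⟨⟨-, hwj⟩, hwu, -⟩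
      exact hju (rel_eq_of_mem S hwj hwu)
    rw [heq]
    simp

lemma MP_mul_MJ {i j u v : Fin (d+1)} (hki : S.k i = 2) (hkj : S.k j = 2) :
    MP S K x i j * MJ S K x u v = if j = u then MJ S K x i v else 0 := by
  have h := MJ_mul_MP S K x (i := v) (j := u) (u := j) (v := i) hkj hki
  have h2 := congrArg Matrix.transpose h
  rw [Matrix.transpose_mul, MP_transpose, MJ_transpose, apply_ite Matrix.transpose,
    MJ_transpose, Matrix.transpose_zero] at h2
  rw [h2]
  rcases eq_or_ne j u with rfl | hju
  · simp
  · rw [if_neg (fun h' => hju h'.symm), if_neg hju]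

end QTCell
namespace QTCell
open Finset Matrix

variable {X : Type} [Fintype X] [DecidableEq X] [LinearOrder X] {d : ℕ}
  (S : AssocScheme X d) (K : Type) [Field K] (x : X)

lemma pnum_le (i s j : Fin (d+1)) : S.pnum i s j ≤ S.k i := by
  obtain ⟨⟨x', z⟩, hq⟩ := S.rel_nonempty j
  rw [← colcount S x' i s hq, ← card_xR S x' i]
  apply Finset.card_le_card
  intro w hw
  rw [Finset.mem_filter] at hw
  exact (mem_xR S).2 hw.2.1

lemma sim_of_pnum_one {i j : Fin (d+1)} {s : Fin (d+1)} (hki : S.k i = 2) (hkj : S.k j = 2)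
    (h1 : S.pnum i s j = 1) : S.sim i j := by
  refine ⟨hki, hkj, Or.inl ?_⟩
  obtain ⟨⟨x', z⟩, hq⟩ := S.rel_nonempty j
  have hsum : (∑ ℓ : Fin (d+1), S.pnum i ℓ j) = 2 := by
    rw [sum_pnum S i hq, hki]
  have hex : ∃ s', s' ≠ s ∧ 0 < S.pnum i s' j := by
    by_contra hcon
    push_neg at hcon
    have : (∑ ℓ : Fin (d+1), S.pnum i ℓ j) = S.pnum i s j := by
      apply Finset.sum_eq_single
      · intro b _ hb
        have := hcon b hb
        omega
      · intro h; exact absurd (Finset.mem_univ s) h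
    omega
  obtain ⟨s', hs's, hs'⟩ := hex
  have hF : Finset.univ.filter (fun ℓ : Fin (d+1) => 0 < S.pnum (S.transp i) j ℓ)
      = {s, s'} := by
    ext ℓ
    rw [Finset.mem_filter, pnum_pos_iff]
    simp only [Finset.mem_univ, true_and, Finset.mem_insert, Finset.mem_singleton]
    constructor
    · intro hpos
      by_contra hcon
      push_neg at hcon
      have hsub : ({s, s', ℓ} : Finset (Fin (d+1))) ⊆ Finset.univ :=
        Finset.subset_univ _
      have hcard : (∑ w ∈ ({s, s', ℓ} : Finset (Fin (d+1))), S.pnum i w j) =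
          S.pnum i s j + S.pnum i s' j + S.pnum i ℓ j := by
        rw [Finset.sum_insert (by
            simp only [Finset.mem_insert, Finset.mem_singleton]
            exact not_or.2 ⟨fun h => hs's h.symm, fun h => hcon.1 h.symm⟩),
          Finset.sum_insert (by
            simp only [Finset.mem_singleton]
            exact fun h => hcon.2 h.symm), Finset.sum_singleton]
        ring
      have hle : S.pnum i s j + S.pnum i s' j + S.pnum i ℓ j ≤ 2 := by
        rw [← hcard, ← hsum]
        exact Finset.sum_le_sum_of_subset hsub
      omega
    · rintro (rfl | rfl)
      · omega
      · exact hs'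
  rw [AssocScheme.cardProd, hF, Finset.card_image_of_injOn, Finset.card_insert_of_notMem
    (by simp [hs's.symm]), Finset.card_singleton]
  intro a _ b _ hab
  exact rel_injective S hab

lemma exists_pnum_one_of_cardProd {i j : Fin (d+1)} (hki : S.k i = 2)
    (h2 : S.cardProd (S.transp i) j = 2) : ∃ s, S.pnum i s j = 1 := by
  have hcard : 2 ≤ (Finset.univ.filter
      (fun ℓ : Fin (d+1) => 0 < S.pnum (S.transp i) j ℓ)).card := by
    rw [AssocScheme.cardProd] at h2
    calc 2 = _ := h2.symm
    _ ≤ _ := Finset.card_image_le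
  obtain ⟨a, ha, b, hb, hab⟩ := Finset.one_lt_card.1
    (show 1 < (Finset.univ.filter
      fun ℓ : Fin (d+1) => 0 < S.pnum (S.transp i) j ℓ).card by omega)
  rw [Finset.mem_filter, pnum_pos_iff] at ha hb
  obtain ⟨⟨x', z⟩, hq⟩ := S.rel_nonempty j
  have hsum : (∑ ℓ : Fin (d+1), S.pnum i ℓ j) = 2 := by
    rw [sum_pnum S i hq, hki]
  have hsub : ({a, b} : Finset (Fin (d+1))) ⊆ Finset.univ := Finset.subset_univ _
  have hcard2 : (∑ w ∈ ({a, b} : Finset (Fin (d+1))), S.pnum i w j) =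
      S.pnum i a j + S.pnum i b j := by
    rw [Finset.sum_insert (by simp [hab]), Finset.sum_singleton]
  have hle : S.pnum i a j + S.pnum i b j ≤ 2 := by
    rw [← hcard2, ← hsum]
    exact Finset.sum_le_sum_of_subset hsub
  have ha2 := ha.2
  have hb2 := hb.2
  exact ⟨a, by omega⟩

lemma EAE_cases (hqt : ∀ i, S.k i ≤ 2) (i s j : Fin (d+1)) :
    EAE S K x i s j = 0 ∨ EAE S K x i s j = MJ S K x i j ∨
      (S.k i = 2 ∧ S.k j = 2 ∧ S.pnum i s j = 1 ∧
        (EAE S K x i s j = MP S K x i j ∨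
          EAE S K x i s j = MJ S K x i j - MP S K x i j)) := by
  have hc := pnum_le S i s j
  have hk1 := k_pos S i
  have hk2 := hqt i
  rcases Nat.eq_zero_or_pos (S.pnum i s j) with h0 | hpos
  · exact Or.inl (zero_block S K x h0)
  rcases eq_or_ne (S.pnum i s j) (S.k i) with hfull | hne
  · exact Or.inr (Or.inl (full_block S K x hfull))
  have hki : S.k i = 2 := by omega
  have h1 : S.pnum i s j = 1 := by omega
  have hkj : S.k j = 2 := by
    have := count_sym S x i s j
    rw [hki, h1] at this
    have hj1 := k_pos S j
    have hj2 := hqt j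
    omega
  exact Or.inr (Or.inr ⟨hki, hkj, h1, perm_block S K x hki hkj h1⟩)

lemma MP_mem_of_pnum {i s j : Fin (d+1)} (hki : S.k i = 2) (hkj : S.k j = 2)
    (h1 : S.pnum i s j = 1) : MP S K x i j ∈ S.terwilliger K x := by
  rcases perm_block S K x hki hkj h1 with h | h
  · rw [← h]; exact EAE_mem S K x i s j
  · have : MP S K x i j = MJ S K x i j - EAE S K x i s j := by
      rw [h, sub_sub_cancel]
    rw [this]
    exact sub_mem (MJ_mem S K x i j) (EAE_mem S K x i s j)

lemma MP_mem_of_sim {i j : Fin (d+1)} (h : S.sim i j) :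
    MP S K x i j ∈ S.terwilliger K x := by
  obtain ⟨hki, hkj, hcase⟩ := h
  rcases hcase with h2 | hbad
  · obtain ⟨s, hs⟩ := exists_pnum_one_of_cardProd S hki h2
    exact MP_mem_of_pnum S K x hki hkj hs
  · obtain ⟨n, ii, jj, ll, hi0, hln, hall, -, hchain⟩ := hbad
    have main : ∀ b : Fin (n+1), MP S K x (ii 0) (ll b) ∈ S.terwilliger K x := by
      intro b
      induction b using Fin.induction with
      | zero =>
        obtain ⟨h1, h2, h3⟩ := hall 0
        exact MP_mem_of_pnum S K x h1 h2 h3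
      | succ b ih =>
        obtain ⟨h1, h2, h3⟩ := hall b.succ
        have hcur : MP S K x (ii b.succ) (ll b.succ) ∈ S.terwilliger K x :=
          MP_mem_of_pnum S K x h1 h2 h3
        have hprod := MP_mul_MP S K x (i := ii 0) (j := ll b.castSucc)
          (u := ii b.succ) (v := ll b.succ) (hall 0).1 (hall b.castSucc).2.1
        rw [if_pos (hchain b)] at hprod
        rw [← hprod]
        exact mul_mem ih hcur
    have := main (Fin.last n)
    rw [hi0, hln] at this
    exact this

end QTCell

open QTCell

/-- The Terwilliger algebra of a quasi-thin association scheme is cellular with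
respect to matrix transpose, with cell datum `I = {0, 1, …, r}` ordered by
`0 < 1, …, 0 < r` (`1, …, r` pairwise incomparable), `M(ℓ) = C_ℓ` and cellular
basis `{b^ℓ_{ij}}`. -/
theorem terwilliger_quasiThin_cellular
    {X : Type} [Fintype X] [DecidableEq X] [LinearOrder X] {d : ℕ}
    (S : AssocScheme X d) (K : Type) [Field K] (x : X)
    (hqt : ∀ i, S.k i ≤ 2)
    (r : ℕ) (C : Fin (r + 1) → Finset (Fin (d + 1)))
    (hC0 : C 0 = Finset.univ)
    (hCne : ∀ l, l ≠ 0 → (C l).Nonempty)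
    (hCpart : ∀ i : Fin (d + 1), S.k i = 2 → ∃! l : Fin (r + 1), l ≠ 0 ∧ i ∈ C l)
    (hCclass : ∀ l, l ≠ 0 → ∀ i ∈ C l, ∀ j, j ∈ C l ↔ S.sim i j)
 :
    -- (C1) : the `b^ℓ_{ij}` (for `ℓ ∈ I`, `i, j ∈ M(ℓ) = C_ℓ`) form a basis of `T`
    (∃ bb : Module.Basis (Σ l : Fin (r + 1), {i // i ∈ C l} × {j // j ∈ C l}) K
        ↥(S.terwilliger K x),
      ∀ s : Σ l : Fin (r + 1), {i // i ∈ C l} × {j // j ∈ C l}, ((bb s : ↥(S.terwilliger K x)) : Matrix X X K) =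
        S.bElem K x s.1 s.2.1.1 s.2.2.1) ∧
    -- (C2) : matrix transpose is an involution of `T` with `t(b^ℓ_{ij}) = b^ℓ_{ji}`
    (∀ M ∈ S.terwilliger K x, Matrix.transpose M ∈ S.terwilliger K x) ∧
    (∀ M N : Matrix X X K,
      Matrix.transpose (M * N) = Matrix.transpose N * Matrix.transpose M) ∧
    (∀ M : Matrix X X K, Matrix.transpose (Matrix.transpose M) = M) ∧
    (∀ (l : Fin (r + 1)) (i j : Fin (d + 1)), i ∈ C l → j ∈ C l →
      Matrix.transpose (S.bElem K x l i j) = S.bElem K x l j i) ∧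
    -- (C3) : `a · b^ℓ_{ij} = ∑_{u ∈ C_ℓ} r_a(u, i) b^ℓ_{uj} + r'` with `r_a(u, i)`
    -- independent of `j`, and `r'` a linear combination of the `b^0_{uv}`
    -- (basis elements of strictly smaller index; for `ℓ = 0`, `r' = 0`)
    (∃ ra : Fin (r + 1) → ↥(S.terwilliger K x) → Fin (d + 1) → Fin (d + 1) → K,
      ∀ (a : ↥(S.terwilliger K x)) (l : Fin (r + 1)) (i j : Fin (d + 1)),
        i ∈ C l → j ∈ C l →
        ∃ s ∈ Submodule.span K
            {m : Matrix X X K | ∃ u v : Fin (d + 1),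
              m = S.bElem K x (0 : Fin (r + 1)) u v},
          (a : Matrix X X K) * S.bElem K x l i j =
            (∑ u ∈ C l, ra l a u i • S.bElem K x l u j) + s ∧
          (l = 0 → s = 0)) := by
  classical
  -- notation
  set T := S.terwilliger K x with hTdef
  have k2_of_mem : ∀ l : Fin (r+1), l ≠ 0 → ∀ i ∈ C l, S.k i = 2 := by
    intro l hl i hi
    exact ((hCclass l hl i hi i).1 hi).1
  have class_unique : ∀ (l w : Fin (r+1)), l ≠ 0 → w ≠ 0 →
      ∀ i, i ∈ C l → i ∈ C w → l = w := by
    intro l w hl hw i hil hiw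
    obtain ⟨l', -, huniq⟩ := hCpart i (k2_of_mem l hl i hil)
    rw [huniq l ⟨hl, hil⟩, huniq w ⟨hw, hiw⟩]
  -- the basis family
  have F_mem : ∀ σ : Σ l : Fin (r + 1), {i // i ∈ C l} × {j // j ∈ C l},
      S.bElem K x σ.1 σ.2.1.1 σ.2.2.1 ∈ T := by
    rintro ⟨l, ⟨i, hi⟩, ⟨j, hj⟩⟩
    by_cases hl : l = 0
    · subst hl
      rw [bElem_zero]
      exact MJ_mem S K x i j
    · rw [bElem_ne S K x hl]
      exact MP_mem_of_sim S K x ((hCclass l hl i hi j).1 hj)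
  set F : (Σ l : Fin (r + 1), {i // i ∈ C l} × {j // j ∈ C l}) → Matrix X X K :=
    fun σ => S.bElem K x σ.1 σ.2.1.1 σ.2.2.1 with hFdef
  set P : Submodule K (Matrix X X K) := Submodule.span K (Set.range F) with hPdef
  have MJ_mem_P : ∀ i j : Fin (d+1), MJ S K x i j ∈ P := by
    intro i j
    apply Submodule.subset_span
    exact ⟨⟨0, ⟨i, hC0 ▸ Finset.mem_univ i⟩, ⟨j, hC0 ▸ Finset.mem_univ j⟩⟩,
      bElem_zero S K x i j⟩
  have MP_mem_P' : ∀ (l : Fin (r+1)), l ≠ 0 → ∀ i ∈ C l, ∀ j ∈ C l,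
      MP S K x i j ∈ P := by
    intro l hl i hi j hj
    apply Submodule.subset_span
    exact ⟨⟨l, ⟨i, hi⟩, ⟨j, hj⟩⟩, bElem_ne S K x hl i j⟩
  have MP_mem_P : ∀ i j : Fin (d+1), S.sim i j → MP S K x i j ∈ P := by
    intro i j hsim
    obtain ⟨l, ⟨hl0, hil⟩, -⟩ := hCpart i hsim.1
    exact MP_mem_P' l hl0 i hil j ((hCclass l hl0 i hil j).2 hsim)
  have EAE_mem_P : ∀ i s j : Fin (d+1), EAE S K x i s j ∈ P := by
    intro i s j
    rcases EAE_cases S K x hqt i s j with h | h | ⟨hki, hkj, h1, hperm⟩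
    · rw [h]; exact zero_mem P
    · rw [h]; exact MJ_mem_P i j
    · have hsim := sim_of_pnum_one S hki hkj h1
      rcases hperm with h | h
      · rw [h]; exact MP_mem_P i j hsim
      · rw [h]; exact sub_mem (MJ_mem_P i j) (MP_mem_P i j hsim)
  have dualIdem_mem_P : ∀ i : Fin (d+1), S.dualIdem K x i ∈ P := by
    intro i
    have hk1 := k_pos S i
    have hk2 := hqt i
    rcases (show S.k i = 1 ∨ S.k i = 2 by omega) with hk | hk
    · have : S.dualIdem K x i = MJ S K x i i := by
        ext y z
        simp only [AssocScheme.dualIdem, MJ, Matrix.of_apply]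
        refine if_congr ⟨?_, ?_⟩ rfl rfl
        · rintro ⟨rfl, h⟩; exact ⟨h, h⟩
        · rintro ⟨h1, h2⟩
          have hcard : (S.xR x i).card = 1 := by rw [card_xR, hk]
          exact ⟨Finset.card_le_one.1 (le_of_eq hcard) _ ((mem_xR S).2 h1) _
            ((mem_xR S).2 h2), h1⟩
      rw [this]; exact MJ_mem_P i i
    · obtain ⟨l, ⟨hl0, hil⟩, -⟩ := hCpart i hk
      have : S.dualIdem K x i = MP S K x i i := by
        ext y z
        simp only [AssocScheme.dualIdem, MP, Matrix.of_apply]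
        refine if_congr ⟨?_, ?_⟩ rfl rfl
        · rintro ⟨rfl, h⟩; exact ⟨h, h, rfl⟩
        · rintro ⟨h1, h2, h3⟩
          exact ⟨pos_injOn ((mem_xR S).2 h1) ((mem_xR S).2 h2) h3, h1⟩
      rw [this]; exact MP_mem_P' l hl0 i hil i hil
  have adj_mem_P : ∀ s : Fin (d+1), S.adj K s ∈ P := by
    intro s
    have hadj : S.adj K s = ∑ i : Fin (d+1), ∑ j : Fin (d+1), EAE S K x i s j := by
      have h1 : S.adj K s = (∑ i : Fin (d+1), S.dualIdem K x i) * S.adj K s *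
          (∑ j : Fin (d+1), S.dualIdem K x j) := by
        rw [sum_dualIdem, one_mul, mul_one]
      rw [h1, Finset.sum_mul, Finset.sum_mul]
      apply Finset.sum_congr rfl
      intro i _
      rw [Finset.mul_sum]
      rfl
    rw [hadj]
    exact Submodule.sum_mem P fun i _ => Submodule.sum_mem P fun j _ => EAE_mem_P i s j
  have one_mem_P : (1 : Matrix X X K) ∈ P := by
    rw [← sum_dualIdem S K x]
    exact Submodule.sum_mem P fun i _ => dualIdem_mem_P i
  have prod_mem_P : ∀ σ τ, F σ * F τ ∈ P := by
    rintro ⟨w, ⟨u, hu⟩, ⟨v, hv⟩⟩ ⟨l, ⟨i, hi⟩, ⟨j, hj⟩⟩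
    by_cases hw : w = 0 <;> by_cases hl : l = 0
    · subst hw; subst hl
      simp only [hFdef, bElem_zero]
      rw [MJ_mul_MJ]
      exact Submodule.smul_mem P _ (MJ_mem_P u j)
    · subst hw
      simp only [hFdef, bElem_zero, bElem_ne S K x hl]
      rw [MJ_mul_MP S K x (k2_of_mem l hl i hi) (k2_of_mem l hl j hj)]
      split
      · exact MJ_mem_P u j
      · exact zero_mem P
    · subst hl
      simp only [hFdef, bElem_zero, bElem_ne S K x hw]
      rw [MP_mul_MJ S K x (k2_of_mem w hw u hu) (k2_of_mem w hw v hv)]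
      split
      · exact MJ_mem_P u j
      · exact zero_mem P
    · simp only [hFdef, bElem_ne S K x hl, bElem_ne S K x hw]
      rw [MP_mul_MP S K x (k2_of_mem w hw u hu) (k2_of_mem w hw v hv)]
      split
      · rename_i hvi
        have hlw : w = l := class_unique w l hw hl v hv (hvi ▸ hi)
        exact MP_mem_P' l hl u (hlw ▸ hu) j hj
      · exact zero_mem P
  have mul_right_P : ∀ σ, ∀ b ∈ P, F σ * b ∈ P := by
    intro σ b hb
    induction hb using Submodule.span_induction with
    | mem c hc => obtain ⟨τ, rfl⟩ := hc; exact prod_mem_P σ τ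
    | zero => rw [mul_zero]; exact zero_mem P
    | add u v _ _ hu hv => rw [mul_add]; exact add_mem hu hv
    | smul c u _ hu => rw [mul_smul_comm]; exact Submodule.smul_mem P c hu
  have mul_mem_P : ∀ a ∈ P, ∀ b ∈ P, a * b ∈ P := by
    intro a ha b hb
    induction ha using Submodule.span_induction with
    | mem c hc => obtain ⟨σ, rfl⟩ := hc; exact mul_right_P σ b hb
    | zero => rw [zero_mul]; exact zero_mem P
    | add u v _ _ hu hv => rw [add_mul]; exact add_mem hu hv
    | smul c u _ hu => rw [smul_mul_assoc]; exact Submodule.smul_mem P c hu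
  have T_le_P : ∀ a ∈ T, a ∈ P := by
    intro a ha
    induction ha using Algebra.adjoin_induction with
    | mem c hc =>
      rcases hc with ⟨s, rfl⟩ | ⟨i, rfl⟩
      · exact adj_mem_P s
      · exact dualIdem_mem_P i
    | algebraMap c =>
      rw [Algebra.algebraMap_eq_smul_one]
      exact Submodule.smul_mem P c one_mem_P
    | add a b _ _ ha hb => exact add_mem ha hb
    | mul a b _ _ ha hb => exact mul_mem_P a ha b hb
  -- linear independence
  have Fsupp : ∀ (l' : Fin (r+1)) (u v : Fin (d+1)) (y z : X),
      S.bElem K x l' u v y z ≠ 0 → (x, y) ∈ S.rel u ∧ (x, z) ∈ S.rel v := by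
    intro l' u v y z hne
    by_cases hl' : l' = 0
    · subst hl'
      rw [bElem_zero] at hne
      by_cases hcond : (x, y) ∈ S.rel u ∧ (x, z) ∈ S.rel v
      · exact hcond
      · exact absurd (by simp [MJ, hcond] : MJ S K x u v y z = 0) hne
    · rw [bElem_ne S K x hl'] at hne
      by_cases hcond : (x, y) ∈ S.rel u ∧ (x, z) ∈ S.rel v ∧
          ((S.xR x u).filter (fun w => w < y)).card =
            ((S.xR x v).filter (fun w => w < z)).card
      · exact ⟨hcond.1, hcond.2.1⟩
      · exact absurd (by simp only [MP, Matrix.of_apply, if_neg hcond] :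
          MP S K x u v y z = 0) hne
  have lin : LinearIndependent K F := by
    rw [Fintype.linearIndependent_iff]
    intro c hc
    have h0 : ∀ y z : X,
        (∑ σ' : Σ l' : Fin (r+1), {i' // i' ∈ C l'} × {j' // j' ∈ C l'},
          c σ' * F σ' y z) = 0 := by
      intro y z
      have h1 : (∑ σ' : Σ l' : Fin (r+1), {i' // i' ∈ C l'} × {j' // j' ∈ C l'},
          c σ' • F σ') y z = 0 := by rw [hc]; rfl
      rw [Matrix.sum_apply] at h1
      simpa [Matrix.smul_apply, smul_eq_mul] using h1
    rintro ⟨l, ⟨i, hi⟩, ⟨j, hj⟩⟩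
    obtain ⟨y1, hy1mem, hy1pos⟩ := pos_surj
      (show 0 < (S.xR x i).card by rw [card_xR]; exact k_pos S i)
    obtain ⟨z1, hz1mem, hz1pos⟩ := pos_surj
      (show 0 < (S.xR x j).card by rw [card_xR]; exact k_pos S j)
    have hy1 : (x, y1) ∈ S.rel i := (mem_xR S).1 hy1mem
    have hz1 : (x, z1) ∈ S.rel j := (mem_xR S).1 hz1mem
    have hred : ∀ z : X, (x, z) ∈ S.rel j →
        (∑ σ' ∈ Finset.univ.filter
            (fun σ' : Σ l' : Fin (r+1), {i' // i' ∈ C l'} × {j' // j' ∈ C l'} =>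
              σ'.2.1.1 = i ∧ σ'.2.2.1 = j), c σ' * F σ' y1 z) = 0 := by
      intro z hz
      rw [Finset.sum_filter_of_ne]
      · exact h0 y1 z
      · rintro ⟨l', ⟨u, hu⟩, ⟨v, hv⟩⟩ - hne
        have hne' : S.bElem K x l' u v y1 z ≠ 0 := by
          intro h
          apply hne
          show c _ * S.bElem K x l' u v y1 z = 0
          rw [h, mul_zero]
        obtain ⟨h1, h2⟩ := Fsupp l' u v y1 z hne'
        exact ⟨rel_eq_of_mem S h1 hy1, rel_eq_of_mem S h2 hz⟩
    -- the distinguished indices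
    have hi0 : i ∈ C 0 := hC0 ▸ Finset.mem_univ i
    have hj0 : j ∈ C 0 := hC0 ▸ Finset.mem_univ j
    set σ0 : Σ l' : Fin (r+1), {i' // i' ∈ C l'} × {j' // j' ∈ C l'} :=
      ⟨0, ⟨i, hi0⟩, ⟨j, hj0⟩⟩ with hσ0def
    have hF0 : ∀ z : X, (x, z) ∈ S.rel j → F σ0 y1 z = 1 := by
      intro z hz
      show S.bElem K x (0 : Fin (r+1)) i j y1 z = 1
      rw [bElem_zero]
      simp [MJ, hy1, hz]
    by_cases hex : ∃ l' : Fin (r+1), l' ≠ 0 ∧ i ∈ C l' ∧ j ∈ C l'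
    · obtain ⟨lc, hlc0, hilc, hjlc⟩ := hex
      set σ1 : Σ l' : Fin (r+1), {i' // i' ∈ C l'} × {j' // j' ∈ C l'} :=
        ⟨lc, ⟨i, hilc⟩, ⟨j, hjlc⟩⟩ with hσ1def
      have hσ01 : σ0 ≠ σ1 := by
        intro h
        exact hlc0 (congrArg Sigma.fst h).symm
      have hfilter : Finset.univ.filter
          (fun σ' : Σ l' : Fin (r+1), {i' // i' ∈ C l'} × {j' // j' ∈ C l'} =>
            σ'.2.1.1 = i ∧ σ'.2.2.1 = j) = {σ0, σ1} := by
        ext σ'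
        simp only [Finset.mem_filter, Finset.mem_univ, true_and, Finset.mem_insert,
          Finset.mem_singleton]
        constructor
        · rcases σ' with ⟨l', ⟨u, hu⟩, ⟨v, hv⟩⟩
          rintro ⟨h1, h2⟩
          simp only at h1 h2
          subst h1
          subst h2
          by_cases hl'0 : l' = 0
          · subst hl'0; left; rfl
          · right
            have : l' = lc := class_unique l' lc hl'0 hlc0 u hu hilc
            subst this
            rfl
        · rintro (rfl | rfl)
          · exact ⟨rfl, rfl⟩
          · exact ⟨rfl, rfl⟩
      have hF1 : ∀ z : X, (x, z) ∈ S.rel j →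
          F σ1 y1 z = if (0 : ℕ) = ((S.xR x j).filter (fun w => w < z)).card
            then 1 else 0 := by
        intro z hz
        show S.bElem K x lc i j y1 z = _
        rw [bElem_ne S K x hlc0]
        simp only [MP, Matrix.of_apply, hy1pos, hy1, hz, true_and]
      have hkj2 : S.k j = 2 := k2_of_mem lc hlc0 j hjlc
      obtain ⟨z2, hz2mem, hz2pos⟩ := pos_surj
        (show 1 < (S.xR x j).card by rw [card_xR, hkj2]; omega)
      have hz2 : (x, z2) ∈ S.rel j := (mem_xR S).1 hz2mem
      have heqA := hred z1 hz1
      have heqB := hred z2 hz2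
      rw [hfilter, Finset.sum_insert (by simp [hσ01]), Finset.sum_singleton,
        hF0 z1 hz1, hF1 z1 hz1, hz1pos] at heqA
      rw [hfilter, Finset.sum_insert (by simp [hσ01]), Finset.sum_singleton,
        hF0 z2 hz2, hF1 z2 hz2, hz2pos] at heqB
      norm_num at heqA
      rw [if_neg (by omega), mul_zero, mul_one, add_zero] at heqB
      -- heqA : c σ0 + c σ1 = 0 ; heqB : c σ0 = 0
      have hcσ1 : c σ1 = 0 := by
        rw [heqB, zero_add] at heqA
        exact heqA
      by_cases hl : l = 0
      · subst hl
        exact heqB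
      · have : l = lc := class_unique l lc hl hlc0 i hi hilc
        subst this
        exact hcσ1
    · have hfilter : Finset.univ.filter
          (fun σ' : Σ l' : Fin (r+1), {i' // i' ∈ C l'} × {j' // j' ∈ C l'} =>
            σ'.2.1.1 = i ∧ σ'.2.2.1 = j) = {σ0} := by
        ext σ'
        simp only [Finset.mem_filter, Finset.mem_univ, true_and, Finset.mem_singleton]
        constructor
        · rcases σ' with ⟨l', ⟨u, hu⟩, ⟨v, hv⟩⟩
          rintro ⟨h1, h2⟩
          simp only at h1 h2
          subst h1
          subst h2
          by_cases hl'0 : l' = 0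
          · subst hl'0; rfl
          · exact absurd ⟨l', hl'0, hu, hv⟩ hex
        · rintro rfl
          exact ⟨rfl, rfl⟩
      have heqA := hred z1 hz1
      rw [hfilter, Finset.sum_singleton, hF0 z1 hz1, mul_one] at heqA
      by_cases hl : l = 0
      · subst hl
        exact heqA
      · exact absurd ⟨l, hl, hi, hj⟩ hex
  -- basis of T
  have bbexists : ∃ bb : Module.Basis (Σ l : Fin (r + 1), {i // i ∈ C l} × {j // j ∈ C l}) K ↥T,
      ∀ σ : Σ l : Fin (r + 1), {i // i ∈ C l} × {j // j ∈ C l},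
        ((bb σ : ↥T) : Matrix X X K) = F σ := by
    set Fc : (Σ l : Fin (r + 1), {i // i ∈ C l} × {j // j ∈ C l}) → ↥T :=
      fun σ => ⟨F σ, F_mem σ⟩ with hFc
    have linc : LinearIndependent K Fc :=
      LinearIndependent.of_comp (Subalgebra.toSubmodule T).subtype lin
    have hspan : ∀ a : ↥T, a ∈ Submodule.span K (Set.range Fc) := by
      have key : ∀ m ∈ P, ∃ h : m ∈ T,
          (⟨m, h⟩ : ↥T) ∈ Submodule.span K (Set.range Fc) := by
        intro m hm
        induction hm using Submodule.span_induction with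
        | mem c hc =>
          obtain ⟨σ, rfl⟩ := hc
          exact ⟨F_mem σ, Submodule.subset_span ⟨σ, rfl⟩⟩
        | zero =>
          refine ⟨zero_mem T, ?_⟩
          have h0 : (⟨0, zero_mem T⟩ : ↥T) = 0 := rfl
          rw [h0]
          exact zero_mem _
        | add a b _ _ ha hb =>
          obtain ⟨hta, hsa⟩ := ha
          obtain ⟨htb, hsb⟩ := hb
          refine ⟨add_mem hta htb, ?_⟩
          have h0 : (⟨a + b, add_mem hta htb⟩ : ↥T) = (⟨a, hta⟩ : ↥T) + (⟨b, htb⟩ : ↥T) := rfl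
          rw [h0]
          exact add_mem hsa hsb
        | smul c a _ ha =>
          obtain ⟨hta, hsa⟩ := ha
          refine ⟨Subalgebra.smul_mem T hta c, ?_⟩
          have h0 : (⟨c • a, Subalgebra.smul_mem T hta c⟩ : ↥T) = c • (⟨a, hta⟩ : ↥T) := rfl
          rw [h0]
          exact Submodule.smul_mem _ c hsa
      intro a
      obtain ⟨h, hs⟩ := key (a : Matrix X X K) (T_le_P _ a.2)
      have : (⟨(a : Matrix X X K), h⟩ : ↥T) = a := Subtype.ext rfl
      rwa [this] at hs
    refine ⟨Module.Basis.mk linc (fun a _ => hspan a), fun σ => ?_⟩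
    rw [Module.Basis.mk_apply]
  -- C3
  have C3 : ∃ ra : Fin (r + 1) → ↥T → Fin (d + 1) → Fin (d + 1) → K,
      ∀ (a : ↥T) (l : Fin (r + 1)) (i j : Fin (d + 1)),
        i ∈ C l → j ∈ C l →
        ∃ s ∈ Submodule.span K
            {m : Matrix X X K | ∃ u v : Fin (d + 1),
              m = S.bElem K x (0 : Fin (r + 1)) u v},
          (a : Matrix X X K) * S.bElem K x l i j =
            (∑ u ∈ C l, ra l a u i • S.bElem K x l u j) + s ∧
          (l = 0 → s = 0) := by
    set span0 := Submodule.span K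
      {m : Matrix X X K | ∃ u v : Fin (d + 1), m = S.bElem K x (0 : Fin (r + 1)) u v}
      with hspan0
    have MJ_mem_span0 : ∀ u v : Fin (d+1), MJ S K x u v ∈ span0 := fun u v =>
      Submodule.subset_span ⟨u, v, (bElem_zero S K x u v).symm⟩
    have hsumaux : ∀ (D : Finset (Fin (d+1))) (u : Fin (d+1)) (cnd : Prop)
        [Decidable cnd] (cc : K) (G : Fin (d+1) → Matrix X X K),
        (∑ u' ∈ D, (if u' = u ∧ cnd then cc else 0) • G u')
          = if cnd ∧ u ∈ D then cc • G u else 0 := by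
      intro D u cnd hdec cc G
      by_cases h : cnd
      · have : ∀ u' ∈ D, (if u' = u ∧ cnd then cc else 0) • G u'
            = if u' = u then cc • G u' else 0 := by
          intro u' _
          by_cases h' : u' = u <;> simp [h', h]
        rw [Finset.sum_congr rfl this, Finset.sum_ite_eq' D u (fun u' => cc • G u')]
        by_cases hu : u ∈ D <;> simp [h, hu]
      · have : ∀ u' ∈ D, (if u' = u ∧ cnd then cc else 0) • G u' = 0 := by
          intro u' _
          simp [h]
        rw [Finset.sum_congr rfl this]
        simp [h]
    have Qstmt : ∀ (l : Fin (r+1)) (a : Matrix X X K), a ∈ P →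
        ∃ f : Fin (d+1) → Fin (d+1) → K, ∀ i j : Fin (d+1), i ∈ C l → j ∈ C l →
          ∃ s ∈ span0,
            a * S.bElem K x l i j = (∑ u ∈ C l, f u i • S.bElem K x l u j) + s ∧
            (l = 0 → s = 0) := by
      intro l a ha
      induction ha using Submodule.span_induction with
      | mem cm hcm =>
        obtain ⟨⟨w, ⟨u, hu⟩, ⟨v, hv⟩⟩, rfl⟩ := hcm
        simp only [hFdef]
        by_cases hw : w = 0 <;> by_cases hl : l = 0
        · subst hw; subst hl
          refine ⟨fun u' i' => if u' = u ∧ i' = v then (S.k v : K) else 0, ?_⟩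
          intro i j hi hj
          refine ⟨0, zero_mem _, ?_, fun _ => rfl⟩
          beta_reduce
          rw [add_zero, bElem_zero, bElem_zero, MJ_mul_MJ,
            hsumaux (C 0) u (i = v) _ _]
          by_cases hvi : v = i
          · rw [if_pos hvi, if_pos ⟨hvi.symm, hC0 ▸ Finset.mem_univ u⟩, bElem_zero]
          · rw [if_neg hvi, if_neg (fun hq => hvi hq.1.symm), zero_smul]
        · subst hw
          refine ⟨fun _ _ => 0, ?_⟩
          intro i j hi hj
          refine ⟨if v = i then MJ S K x u j else 0, ?_, ?_, fun h => absurd h hl⟩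
          · by_cases hvi : v = i
            · rw [if_pos hvi]; exact MJ_mem_span0 u j
            · rw [if_neg hvi]; exact zero_mem _
          · rw [bElem_zero, bElem_ne S K x hl,
              MJ_mul_MP S K x (k2_of_mem l hl i hi) (k2_of_mem l hl j hj)]
            have : (∑ u' ∈ C l, (0:K) • S.bElem K x l u' j) = 0 := by simp
            rw [this, zero_add]
        · subst hl
          refine ⟨fun u' i' => if u' = u ∧ i' = v then 1 else 0, ?_⟩
          intro i j hi hj
          refine ⟨0, zero_mem _, ?_, fun _ => rfl⟩
          beta_reduce
          rw [add_zero, bElem_zero, bElem_ne S K x hw,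
            MP_mul_MJ S K x (k2_of_mem w hw u hu) (k2_of_mem w hw v hv),
            hsumaux (C 0) u (i = v) _ _]
          by_cases hvi : v = i
          · rw [if_pos hvi, if_pos ⟨hvi.symm, hC0 ▸ Finset.mem_univ u⟩, bElem_zero,
              one_smul]
          · rw [if_neg hvi, if_neg (fun hq => hvi hq.1.symm)]
        · refine ⟨fun u' i' => if u' = u ∧ i' = v then 1 else 0, ?_⟩
          intro i j hi hj
          refine ⟨0, zero_mem _, ?_, fun h => absurd h hl⟩
          beta_reduce
          rw [add_zero, bElem_ne S K x hl, bElem_ne S K x hw,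
            MP_mul_MP S K x (k2_of_mem w hw u hu) (k2_of_mem w hw v hv),
            hsumaux (C l) u (i = v) _ _]
          by_cases hvi : v = i
          · have hvCl : v ∈ C l := by rw [hvi]; exact hi
            have hwl : w = l := class_unique w l hw hl v hv hvCl
            have hul : u ∈ C l := by rw [← hwl]; exact hu
            rw [if_pos hvi, if_pos ⟨hvi.symm, hul⟩, bElem_ne S K x hl, one_smul]
          · rw [if_neg hvi, if_neg (fun hq => hvi hq.1.symm)]
      | zero =>
        refine ⟨fun _ _ => 0, ?_⟩
        intro i j hi hj
        refine ⟨0, zero_mem _, ?_, fun _ => rfl⟩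
        simp
      | add a b _ _ iha ihb =>
        obtain ⟨fa, hfa⟩ := iha
        obtain ⟨fb, hfb⟩ := ihb
        refine ⟨fa + fb, ?_⟩
        intro i j hi hj
        obtain ⟨sa, hsa, heqa, h0a⟩ := hfa i j hi hj
        obtain ⟨sb, hsb, heqb, h0b⟩ := hfb i j hi hj
        refine ⟨sa + sb, add_mem hsa hsb, ?_, ?_⟩
        · have hsplit : (∑ u ∈ C l, ((fa + fb) u i) • S.bElem K x l u j)
              = (∑ u ∈ C l, fa u i • S.bElem K x l u j)
                + ∑ u ∈ C l, fb u i • S.bElem K x l u j := by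
            rw [← Finset.sum_add_distrib]
            apply Finset.sum_congr rfl
            intro u _
            rw [Pi.add_apply, Pi.add_apply, add_smul]
          rw [add_mul, heqa, heqb, hsplit]
          abel
        · intro h
          rw [h0a h, h0b h, add_zero]
      | smul cc a _ iha =>
        obtain ⟨fa, hfa⟩ := iha
        refine ⟨cc • fa, ?_⟩
        intro i j hi hj
        obtain ⟨sa, hsa, heqa, h0a⟩ := hfa i j hi hj
        refine ⟨cc • sa, Submodule.smul_mem _ cc hsa, ?_, ?_⟩
        · have hsplit : (∑ u ∈ C l, ((cc • fa) u i) • S.bElem K x l u j)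
              = cc • ∑ u ∈ C l, fa u i • S.bElem K x l u j := by
            rw [Finset.smul_sum]
            apply Finset.sum_congr rfl
            intro u _
            rw [Pi.smul_apply, Pi.smul_apply, smul_smul, smul_eq_mul]
          rw [smul_mul_assoc, heqa, smul_add, hsplit]
        · intro h
          rw [h0a h, smul_zero]
    have main : ∀ (l : Fin (r+1)) (a : ↥T),
        ∃ f : Fin (d+1) → Fin (d+1) → K, ∀ i j : Fin (d+1), i ∈ C l → j ∈ C l →
          ∃ s ∈ span0,
            (a : Matrix X X K) * S.bElem K x l i j
              = (∑ u ∈ C l, f u i • S.bElem K x l u j) + s ∧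
            (l = 0 → s = 0) :=
      fun l a => Qstmt l (a : Matrix X X K) (T_le_P _ a.2)
    choose f hf using main
    exact ⟨fun l a u i => f l a u i, fun a l i j hi hj => hf l a i j hi hj⟩
  obtain ⟨bb, hbb⟩ := bbexists
  refine ⟨⟨bb, fun σ => hbb σ⟩, fun M hM => transpose_mem S K x hM, fun M N => Matrix.transpose_mul M N,
    fun M => Matrix.transpose_transpose M, ?_, C3⟩
  intro l i j _ _
  by_cases hl : l = 0
  · subst hl; rw [bElem_zero, bElem_zero, MJ_transpose]
  · rw [bElem_ne S K x hl, bElem_ne S K x hl, MP_transpose]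
end
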